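/- arXiv:1110.0966 — 4 statements merged into one kernel-verified Lean document; each statement's English description precedes it below -/
import Mathlib

section
/- Let w ≥ 4 be an integer, assume |p| ≥ 3, and let D be a minimal norm representatives digit set modulo τ^w. Then D is w-subadditive. -/
open Complex

noncomputable section

/-- The lattice `ℤ[τ] = {a + b·τ : a, b ∈ ℤ}` as a subset of `ℂ`. -/
def Ztau (τ : ℂ) : Set ℂ := {z | ∃ a b : ℤ, z = (a : ℂ) + (b : ℂ) * τ}

/-- `z` is divisible by `τ` in `ℤ[τ]`. -/
def TauDvd (τ : ℂ) (z : ℂ) : Prop := ∃ y ∈ Ztau τ, z = τ * y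

/-- `x` is a minimal norm representative modulo `τ^w`: an element of `ℤ[τ]`,
not divisible by `τ`, of minimal norm in its residue class modulo `τ^w`. -/
def MinNormRep (τ : ℂ) (w : ℕ) (x : ℂ) : Prop :=
  x ∈ Ztau τ ∧ ¬ TauDvd τ x ∧
    ∀ y ∈ Ztau τ, ‖x‖ ≤ ‖x - τ ^ w * y‖

/-- `D` is a minimal norm representatives digit set modulo `τ^w`. -/
def IsMinNormDigitSet (τ : ℂ) (w : ℕ) (D : Set ℂ) : Prop :=
  D ⊆ Ztau τ ∧ (0 : ℂ) ∈ D ∧ (∀ d ∈ D, d ≠ 0 → MinNormRep τ w d) ∧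
    ∀ z ∈ Ztau τ, ¬ TauDvd τ z →
      ∃! d, d ∈ D ∧ ∃ y ∈ Ztau τ, z - d = τ ^ w * y

/-- An expansion: a finitely supported sequence of digits. -/
def IsExpansion (D : Set ℂ) (η : ℕ →₀ ℂ) : Prop := ∀ n, η n ∈ D

/-- The `w`-NAF condition: any two distinct nonzero digits have indices at
distance at least `w`. -/
def IsWNAF (w : ℕ) (η : ℕ →₀ ℂ) : Prop :=
  ∀ m n : ℕ, m ≠ n → η m ≠ 0 → η n ≠ 0 → (w : ℤ) ≤ |(m : ℤ) - (n : ℤ)|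

/-- The value of an expansion in base `τ`: `∑ η_n · τ^n`. -/
def evalue (τ : ℂ) (η : ℕ →₀ ℂ) : ℂ := η.sum fun n d => d * τ ^ n

/-- The weight of an expansion: the number of nonzero digits. -/
def eweight (η : ℕ →₀ ℂ) : ℕ := η.support.card

/-- A multi-expansion over the digit set `D`: a finite multiset of pairs
`(d, n)` with `d ∈ D` nonzero. -/
def IsMultiExpansion (D : Set ℂ) (μ : Multiset (ℂ × ℕ)) : Prop :=
  ∀ x ∈ μ, x.1 ∈ D ∧ x.1 ≠ 0

/-- The value of a multi-expansion in base `τ`: `∑ d · τ^n`. -/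
def mvalue (τ : ℂ) (μ : Multiset (ℂ × ℕ)) : ℂ :=
  (μ.map fun x => x.1 * τ ^ x.2).sum

/-- The digit set `D` is `w`-subadditive: the sum of the values of two
singletons has a `w`-NAF-expansion of weight at most `2`. -/
def WSubadditive (τ : ℂ) (w : ℕ) (D : Set ℂ) : Prop :=
  ∀ c ∈ D, ∀ d ∈ D, c ≠ 0 → d ≠ 0 → ∀ m n : ℕ,
    ∃ η : ℕ →₀ ℂ, IsExpansion D η ∧ IsWNAF w η ∧
      evalue τ η = τ ^ m * c + τ ^ n * d ∧ eweight η ≤ 2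

section auxiliary

/-! ### Real-analytic auxiliary lemmas -/

lemma hex_key (Y θ h : ℝ) (hY : 3/4 ≤ Y) (hθ0 : 0 ≤ θ) (hθ1 : θ ≤ 1)
    (hh0 : 0 ≤ h) (hh1 : h ≤ 1/2) :
    θ^2*Y + h^2 ≤ (Y+1/4)^2/(4*Y) ∨ (1-θ)^2*Y + (1/2-h)^2 ≤ (Y+1/4)^2/(4*Y) := by
  by_contra hc
  push_neg at hc
  obtain ⟨h1, h2⟩ := hc
  have hYpos : (0:ℝ) < Y := by linarith
  set s := Real.sqrt Y with hs
  have hspos : 0 < s := Real.sqrt_pos.mpr hYpos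
  have hs2 : s^2 = Y := Real.sq_sqrt hYpos.le
  have hsne : s ≠ 0 := ne_of_gt hspos
  set c := (Y - 1/4)/(2*s) with hcdef
  have hc0 : 0 ≤ c := div_nonneg (by linarith) (by linarith)
  have hrho : (Y+1/4)^2/(4*Y) = c^2 + 1/4 := by
    rw [hcdef, ← hs2]; field_simp; ring
  rw [hrho] at h1 h2
  have hsum : h^2 + (1/2-h)^2 ≤ 1/4 := by nlinarith
  have hts : θ^2*Y = (θ*s)^2 := by rw [← hs2]; ring
  have hts' : (1-θ)^2*Y = ((1-θ)*s)^2 := by rw [← hs2]; ring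
  have ha : c < θ*s := by
    have h3 : c^2 < (θ*s)^2 := by nlinarith
    exact lt_of_pow_lt_pow_left₀ 2 (mul_nonneg hθ0 hspos.le) h3
  have hb : c < (1-θ)*s := by
    have h3 : c^2 < ((1-θ)*s)^2 := by nlinarith
    exact lt_of_pow_lt_pow_left₀ 2 (mul_nonneg (by linarith) hspos.le) h3
  set a := θ*s - c with hadef
  set b := (1-θ)*s - c with hbdef
  have hapos : 0 < a := by simp only [hadef]; linarith
  have hbpos : 0 < b := by simp only [hbdef]; linarith
  have hab : a + b = 1/(4*s) := by
    rw [hadef, hbdef, hcdef, ← hs2]; field_simp; ring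
  have habs : (a+b)^2 = 1/(16*Y) := by
    rw [hab, ← hs2]; field_simp; ring
  have h2cab : 2*c*(a+b) = 1/4 - 1/(16*Y) := by
    rw [hab, hcdef, ← hs2]; field_simp; ring
  clear_value a b
  have k1 : 1/4 - h^2 < 2*c*a + a^2 := by
    have e1 : θ^2*Y = c^2 + 2*c*a + a^2 := by rw [hts, hadef]; ring
    linarith [h1, e1]
  have k2 : 1/4 - (1/2-h)^2 < 2*c*b + b^2 := by
    have e2 : (1-θ)^2*Y = c^2 + 2*c*b + b^2 := by rw [hts', hbdef]; ring
    linarith [h2, e2]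
  have hexp : (a+b)^2 = a^2 + b^2 + 2*a*b := by ring
  have h2ab : 0 < 2*a*b := by positivity
  have hc2 : 2*c*(a+b) = 2*c*a + 2*c*b := by ring
  linarith [k1, k2, hsum, habs, hexp, h2ab, h2cab, hc2]

lemma poly_E1 (s : ℝ) (hs : 0 < s) (h3 : 3 ≤ s^2) : (s^3+2)^2 < (3/4)*s^8 := by
  nlinarith [pow_pos hs 3, pow_pos hs 6, mul_nonneg (sub_nonneg.2 h3) (pow_pos hs 6).le,
    mul_nonneg (sub_nonneg.2 h3) (pow_pos hs 4).le,
    mul_nonneg (sub_nonneg.2 h3) (pow_pos hs 3).le,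
    mul_nonneg (sub_nonneg.2 h3) (pow_pos hs 2).le,
    mul_nonneg (sub_nonneg.2 h3) hs.le, sq_nonneg (s^3 - 3*s), sq_nonneg (s^2-3)]

lemma poly_E2 (s : ℝ) (hs : 0 < s) (h3 : 3 ≤ s^2) :
    (s^2-2)^2*(s^3+2)^2 < s^8*(s^2-9/4) := by
  nlinarith [pow_pos hs 7, pow_pos hs 5, pow_pos hs 3,
    mul_nonneg (sub_nonneg.2 h3) (pow_pos hs 6).le,
    mul_nonneg (sub_nonneg.2 h3) (pow_pos hs 5).le,
    mul_nonneg (sub_nonneg.2 h3) (pow_pos hs 4).le,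
    mul_nonneg (sub_nonneg.2 h3) (pow_pos hs 3).le,
    mul_nonneg (sub_nonneg.2 h3) (pow_pos hs 2).le,
    mul_nonneg (sub_nonneg.2 h3) hs.le,
    mul_nonneg (mul_nonneg (sub_nonneg.2 h3) (sub_nonneg.2 h3)) (pow_pos hs 4).le,
    mul_nonneg (mul_nonneg (sub_nonneg.2 h3) (sub_nonneg.2 h3)) (pow_pos hs 2).le,
    sq_nonneg (s^2-3), sq_nonneg (s^3 - 2*s), sq_nonneg (s^4 - 3*s^2)]

lemma KIodd (s Y : ℝ) (hs : 0 < s) (h3 : 3 ≤ s^2) (hY0 : 3/4 ≤ Y) (hY1 : Y ≤ s^2 - 9/4) :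
    (Y+1/4)^2*(s^3+2)^2 < s^8*Y := by
  rcases le_or_gt ((s^3+2)^2*(Y+5/4)) (s^8) with hc | hc
  · have e1 := poly_E1 s hs h3
    nlinarith [mul_nonneg (sub_nonneg.2 hY0) (sub_nonneg.2 hc)]
  · have e2 := poly_E2 s hs h3
    have h1 : 0 ≤ s^2 - 9/4 - Y := by linarith
    nlinarith [mul_nonneg h1 (sub_nonneg.2 hc.le),
      mul_nonneg (mul_nonneg h1 (by linarith : (0:ℝ) ≤ s^2-3)) (sq_nonneg (s^3+2))]

lemma KIeven (s Y : ℝ) (hs : 0 < s) (h5 : 5 ≤ s^2) (hY1 : Y ≤ s^2 - 4) :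
    (1+Y)*(s^3+2)^2 < s^8 := by
  nlinarith [pow_pos hs 5, pow_pos hs 3, pow_pos hs 6,
    mul_nonneg (sub_nonneg.2 h5) (pow_pos hs 5).le,
    mul_nonneg (sub_nonneg.2 h5) (pow_pos hs 3).le,
    mul_nonneg (sub_nonneg.2 h5) (pow_pos hs 2).le,
    mul_nonneg (sub_nonneg.2 h5) hs.le, sq_nonneg (s^3-2), sq_nonneg (s-1),
    mul_nonneg (sub_nonneg.2 h5) (sq_nonneg (s^3+2))]

/-! ### Lattice lemmas -/

variable {p q : ℤ} {τ : ℂ}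

lemma Ztau_add {z w : ℂ} (hz : z ∈ Ztau τ) (hw : w ∈ Ztau τ) : z + w ∈ Ztau τ := by
  obtain ⟨a, b, rfl⟩ := hz; obtain ⟨c, d, rfl⟩ := hw
  exact ⟨a + c, b + d, by push_cast; ring⟩

lemma Ztau_neg {z : ℂ} (hz : z ∈ Ztau τ) : -z ∈ Ztau τ := by
  obtain ⟨a, b, rfl⟩ := hz; exact ⟨-a, -b, by push_cast; ring⟩

lemma Ztau_zero : (0:ℂ) ∈ Ztau τ := ⟨0, 0, by simp⟩

lemma Ztau_tau_mul (hroot : τ ^ 2 - (p : ℂ) * τ + (q : ℂ) = 0)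
    {z : ℂ} (hz : z ∈ Ztau τ) : τ * z ∈ Ztau τ := by
  obtain ⟨a, b, rfl⟩ := hz
  refine ⟨-q * b, a + p * b, ?_⟩
  have h2 : τ ^ 2 = (p : ℂ) * τ - q := by linear_combination hroot
  push_cast
  linear_combination (b : ℂ) * h2

lemma Ztau_pow_mul (hroot : τ ^ 2 - (p : ℂ) * τ + (q : ℂ) = 0)
    (k : ℕ) {z : ℂ} (hz : z ∈ Ztau τ) : τ ^ k * z ∈ Ztau τ := by
  induction k with
  | zero => simpa using hz
  | succ n ih =>
      have h := Ztau_tau_mul hroot ih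
      have e : τ ^ (n+1) * z = τ * (τ ^ n * z) := by ring
      rwa [e]

lemma tau_re_im (hroot : τ ^ 2 - (p : ℂ) * τ + (q : ℂ) = 0) (him : τ.im ≠ 0) :
    τ.re = (p:ℝ)/2 ∧ τ.im ^ 2 = (q:ℝ) - (p:ℝ)^2/4 := by
  have hre : ((τ ^ 2 - (p : ℂ) * τ + (q : ℂ)).re) = 0 := by rw [hroot]; simp
  have him' : ((τ ^ 2 - (p : ℂ) * τ + (q : ℂ)).im) = 0 := by rw [hroot]; simp
  simp [pow_two, Complex.mul_re, Complex.mul_im, Complex.sub_re, Complex.sub_im,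
    Complex.add_re, Complex.add_im, Complex.ofReal_re] at hre him'
  have h1 : τ.im * (2 * τ.re - (p:ℝ)) = 0 := by nlinarith [him']
  have h2 : 2 * τ.re = (p:ℝ) := by
    rcases mul_eq_zero.1 h1 with h | h
    · exact absurd h him
    · linarith
  constructor
  · linarith
  · nlinarith [hre, h2]

lemma normSq_formula (hre : τ.re = (p:ℝ)/2) (him2 : τ.im ^ 2 = (q:ℝ) - (p:ℝ)^2/4)
    (a b : ℤ) : Complex.normSq ((a : ℂ) + (b : ℂ) * τ) = ((a^2 + a*b*p + b^2*q : ℤ) : ℝ) := by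
  simp only [Complex.normSq_apply, Complex.add_re, Complex.add_im, Complex.mul_re,
    Complex.mul_im, Complex.intCast_re, Complex.intCast_im]
  rw [hre]
  push_cast
  nlinarith [him2]

lemma norm_one_le (hre : τ.re = (p:ℝ)/2) (him2 : τ.im ^ 2 = (q:ℝ) - (p:ℝ)^2/4)
    {z : ℂ} (hz : z ∈ Ztau τ) (h0 : z ≠ 0) :
    1 ≤ Complex.normSq z := by
  obtain ⟨a, b, rfl⟩ := hz
  rw [normSq_formula hre him2 a b]
  have hpos : (0:ℝ) < Complex.normSq ((a : ℂ) + (b : ℂ) * τ) := Complex.normSq_pos.2 h0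
  rw [normSq_formula hre him2 a b] at hpos
  have : (0:ℤ) < a^2 + a*b*p + b^2*q := by exact_mod_cast hpos
  exact_mod_cast this

lemma abs_one_le (hre : τ.re = (p:ℝ)/2) (him2 : τ.im ^ 2 = (q:ℝ) - (p:ℝ)^2/4)
    {z : ℂ} (hz : z ∈ Ztau τ) (h0 : z ≠ 0) :
    1 ≤ ‖z‖ := by
  have h := norm_one_le hre him2 hz h0
  rw [← Complex.sq_norm] at h
  nlinarith [norm_nonneg z]

lemma tau_valuation (hroot : τ ^ 2 - (p : ℂ) * τ + (q : ℂ) = 0)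
    (hre : τ.re = (p:ℝ)/2) (him2 : τ.im ^ 2 = (q:ℝ) - (p:ℝ)^2/4)
    (hq3 : (3:ℝ) ≤ (q:ℝ)) :
    ∀ z ∈ Ztau τ, z ≠ 0 → ∃ (j : ℕ) (u : ℂ), u ∈ Ztau τ ∧ ¬ TauDvd τ u ∧ z = τ ^ j * u := by
  have htauSq : Complex.normSq τ = (q:ℝ) := by
    have h := normSq_formula (p := p) (q := q) hre him2 0 1
    simpa using h
  have main : ∀ n : ℕ, ∀ z ∈ Ztau τ, z ≠ 0 → Complex.normSq z ≤ n →
      ∃ (j : ℕ) (u : ℂ), u ∈ Ztau τ ∧ ¬ TauDvd τ u ∧ z = τ ^ j * u := by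
    intro n
    induction n with
    | zero =>
        intro z hz h0 hle
        have h := norm_one_le hre him2 hz h0
        norm_num at hle
        linarith
    | succ n ih =>
        intro z hz h0 hle
        by_cases hdvd : TauDvd τ z
        · obtain ⟨u, hu, rfl⟩ := hdvd
          have hu0 : u ≠ 0 := by rintro rfl; simp at h0
          have h1u : 1 ≤ Complex.normSq u := norm_one_le hre him2 hu hu0
          have hmul : Complex.normSq (τ * u) = (q:ℝ) * Complex.normSq u := by
            rw [Complex.normSq_mul, htauSq]
          have hn : Complex.normSq u ≤ n := by
            rw [hmul] at hle
            push_cast at hle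
            nlinarith [mul_nonneg (sub_nonneg.2 hq3) (by linarith : (0:ℝ) ≤ Complex.normSq u),
              (Nat.cast_nonneg n : (0:ℝ) ≤ (n:ℝ))]
          obtain ⟨j, v, hv, hvd, hzv⟩ := ih u hu hu0 hn
          exact ⟨j + 1, v, hv, hvd, by rw [hzv]; ring⟩
        · exact ⟨0, z, hz, hdvd, by simp⟩
  intro z hz h0
  obtain ⟨n, hn⟩ := exists_nat_ge (Complex.normSq z)
  exact main n z hz h0 hn

/-! ### Covering lemmas -/

lemma sub_re_im (ζ : ℂ) (a b : ℤ) :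
    (ζ - ((a:ℂ) + (b:ℂ)*τ)).re = ζ.re - (a + b*τ.re) ∧
    (ζ - ((a:ℂ) + (b:ℂ)*τ)).im = ζ.im - b*τ.im := by
  constructor <;>
  simp [Complex.sub_re, Complex.sub_im, Complex.add_re, Complex.add_im,
    Complex.mul_re, Complex.mul_im]

lemma covering_odd (hre : τ.re = (p:ℝ)/2) (him : τ.im ≠ 0) (r : ℤ) (hr : p = 2*r+1)
    (hY34 : 3/4 ≤ τ.im^2) (ζ : ℂ) :
    ∃ g ∈ Ztau τ, Complex.normSq (ζ - g) ≤ (τ.im^2+1/4)^2/(4*τ.im^2) := by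
  set y := τ.im with hy
  set β := ζ.im / y with hβ
  have hβy : β * y = ζ.im := by rw [hβ]; exact div_mul_cancel₀ _ him
  set b₀ := ⌊β⌋ with hb0
  set θ := β - b₀ with hθ
  have hθ0 : 0 ≤ θ := by rw [hθ]; have := Int.floor_le β; linarith
  have hθ1 : θ ≤ 1 := by rw [hθ]; have := Int.lt_floor_add_one β; linarith
  set x₀ := ζ.re - (b₀:ℝ)*((p:ℝ)/2) with hx0
  set a₁ := round x₀ with ha1
  set h₁ := x₀ - a₁ with hh1def
  have hh12 : |h₁| ≤ 1/2 := by rw [hh1def, ha1]; exact abs_sub_round x₀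
  set h := |h₁| with hh
  have hh0 : 0 ≤ h := abs_nonneg _
  clear_value y β θ x₀ h₁ h
  have hv1 : ζ.im - (b₀:ℝ)*y = θ*y := by rw [hθ]; linear_combination -hβy
  have hv2 : ζ.im - ((b₀:ℝ)+1)*y = (θ-1)*y := by rw [hθ]; linear_combination -hβy
  have hpr : (p:ℝ) = 2*(r:ℝ)+1 := by exact_mod_cast congrArg (Int.cast : ℤ → ℝ) hr
  have key := hex_key (y^2) θ h hY34 hθ0 hθ1 hh0 hh12
  rcases key with hk | hk
  · refine ⟨(a₁:ℂ) + (b₀:ℂ)*τ, ⟨a₁, b₀, rfl⟩, ?_⟩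
    obtain ⟨e1, e2⟩ := sub_re_im (τ := τ) ζ a₁ b₀
    rw [Complex.normSq_apply, e1, e2, hre, ← hy]
    have e3 : ζ.re - ((a₁:ℝ) + (b₀:ℝ)*((p:ℝ)/2)) = h₁ := by rw [hh1def, hx0]; ring
    rw [e3, hv1]
    have e4 : h₁*h₁ + θ*y*(θ*y) = θ^2*(y^2) + h^2 := by
      rw [hh, _root_.sq_abs]; ring
    rw [e4]; exact hk
  · by_cases hsgn : 0 ≤ h₁
    · refine ⟨((a₁ - r:ℤ):ℂ) + ((b₀+1:ℤ):ℂ)*τ, ⟨a₁ - r, b₀+1, rfl⟩, ?_⟩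
      obtain ⟨e1, e2⟩ := sub_re_im (τ := τ) ζ (a₁ - r) (b₀+1)
      rw [Complex.normSq_apply, e1, e2, hre, ← hy]
      have e3 : ζ.re - (((a₁ - r:ℤ):ℝ) + ((b₀+1:ℤ):ℝ)*((p:ℝ)/2)) = h₁ - 1/2 := by
        rw [hh1def, hx0, hpr]; push_cast; ring
      have e4 : ζ.im - ((b₀+1:ℤ):ℝ)*y = (θ-1)*y := by push_cast; exact hv2
      rw [e3, e4]
      have e5 : (h₁-1/2)*(h₁-1/2) + (θ-1)*y*((θ-1)*y) = (1-θ)^2*(y^2) + (1/2-h)^2 := by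
        rw [hh, _root_.abs_of_nonneg hsgn]; ring
      rw [e5]; exact hk
    · refine ⟨((a₁ - r - 1:ℤ):ℂ) + ((b₀+1:ℤ):ℂ)*τ, ⟨a₁ - r - 1, b₀+1, rfl⟩, ?_⟩
      obtain ⟨e1, e2⟩ := sub_re_im (τ := τ) ζ (a₁ - r - 1) (b₀+1)
      rw [Complex.normSq_apply, e1, e2, hre, ← hy]
      have e3 : ζ.re - (((a₁ - r - 1:ℤ):ℝ) + ((b₀+1:ℤ):ℝ)*((p:ℝ)/2)) = h₁ + 1/2 := by
        rw [hh1def, hx0, hpr]; push_cast; ring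
      have e4 : ζ.im - ((b₀+1:ℤ):ℝ)*y = (θ-1)*y := by push_cast; exact hv2
      rw [e3, e4]
      have e5 : (h₁+1/2)*(h₁+1/2) + (θ-1)*y*((θ-1)*y) = (1-θ)^2*(y^2) + (1/2-h)^2 := by
        rw [hh, _root_.abs_of_neg (not_le.1 hsgn)]; ring
      rw [e5]; exact hk

lemma covering_even (hre : τ.re = (p:ℝ)/2) (him : τ.im ≠ 0) (r : ℤ) (hr : p = 2*r)
    (ζ : ℂ) :
    ∃ g ∈ Ztau τ, Complex.normSq (ζ - g) ≤ (1 + τ.im^2)/4 := by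
  set y := τ.im with hy
  set β := ζ.im / y with hβ
  have hβy : β * y = ζ.im := by rw [hβ]; exact div_mul_cancel₀ _ him
  set b := round β with hb
  have hbv : |β - b| ≤ 1/2 := by rw [hb]; exact abs_sub_round β
  set x₀ := ζ.re - (b:ℝ)*((p:ℝ)/2) with hx0
  set a := round x₀ with ha
  have hav : |x₀ - a| ≤ 1/2 := by rw [ha]; exact abs_sub_round x₀
  clear_value y β x₀
  refine ⟨(a:ℂ) + (b:ℂ)*τ, ⟨a, b, rfl⟩, ?_⟩
  obtain ⟨e1, e2⟩ := sub_re_im (τ := τ) ζ a b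
  rw [Complex.normSq_apply, e1, e2, hre, ← hy]
  have e3 : ζ.re - ((a:ℝ) + (b:ℝ)*((p:ℝ)/2)) = x₀ - a := by rw [hx0]; ring
  have e4 : ζ.im - (b:ℝ)*y = (β - b)*y := by linear_combination -hβy
  rw [e3, e4]
  have b1 : (x₀ - (a:ℝ))*(x₀ - a) ≤ 1/4 := by
    have h' := abs_le.1 hav
    nlinarith [h'.1, h'.2]
  have b2 : (β - (b:ℝ))*y*((β - b)*y) ≤ y^2/4 := by
    have h' := abs_le.1 hbv
    have hsq : (β-(b:ℝ))*(β-b) ≤ 1/4 := by nlinarith [h'.1, h'.2]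
    nlinarith [mul_le_mul_of_nonneg_right hsq (sq_nonneg y)]
  linarith

/-! ### Expansion helpers -/

lemma expansion_zero (D : Set ℂ) (τ : ℂ) (w : ℕ) (hD0 : (0:ℂ) ∈ D) :
    ∃ η : ℕ →₀ ℂ, IsExpansion D η ∧ IsWNAF w η ∧ evalue τ η = 0 ∧ eweight η ≤ 2 := by
  refine ⟨0, fun n => by simpa using hD0, fun m n _ hm _ => absurd rfl hm, ?_, ?_⟩
  · simp [evalue, Finsupp.sum_zero_index]
  · simp [eweight]

lemma expansion_single (D : Set ℂ) (τ : ℂ) (w : ℕ) (hD0 : (0:ℂ) ∈ D)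
    {e : ℂ} (he : e ∈ D) (a : ℕ) :
    ∃ η : ℕ →₀ ℂ, IsExpansion D η ∧ IsWNAF w η ∧ evalue τ η = τ^a * e ∧ eweight η ≤ 2 := by
  refine ⟨Finsupp.single a e, ?_, ?_, ?_, ?_⟩
  · intro n
    rcases eq_or_ne a n with rfl | hne
    · simpa using he
    · simpa [Finsupp.single_apply, hne] using hD0
  · intro m n hmn hm hn
    exfalso
    have hma : m = a := by
      by_contra h; exact hm (by simp [Finsupp.single_apply, Ne.symm h])
    have hna : n = a := by
      by_contra h; exact hn (by simp [Finsupp.single_apply, Ne.symm h])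
    exact hmn (hma.trans hna.symm)
  · rw [evalue, Finsupp.sum_single_index (zero_mul (τ^a)), mul_comm]
  · have h : (Finsupp.single a e).support ⊆ {a} := Finsupp.support_single_subset
    calc eweight (Finsupp.single a e) ≤ ({a} : Finset ℕ).card := Finset.card_le_card h
      _ ≤ 2 := by simp

lemma expansion_two (D : Set ℂ) (τ : ℂ) (w : ℕ) (hw1 : 1 ≤ w) (hD0 : (0:ℂ) ∈ D)
    {e f : ℂ} (he : e ∈ D) (hf : f ∈ D) (a b : ℕ) (hab : (w:ℤ) ≤ |(a:ℤ) - (b:ℤ)|) :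
    ∃ η : ℕ →₀ ℂ, IsExpansion D η ∧ IsWNAF w η ∧
      evalue τ η = τ^a * e + τ^b * f ∧ eweight η ≤ 2 := by
  have hne : a ≠ b := by
    rintro rfl; simp at hab; omega
  refine ⟨Finsupp.single a e + Finsupp.single b f, ?_, ?_, ?_, ?_⟩
  · intro n
    rcases eq_or_ne n a with rfl | hna
    · simpa [Finsupp.add_apply, Finsupp.single_apply, hne.symm] using he
    · rcases eq_or_ne n b with rfl | hnb
      · simpa [Finsupp.add_apply, Finsupp.single_apply, hne, Ne.symm hna] using hf
      · simpa [Finsupp.add_apply, Finsupp.single_apply, Ne.symm hna, Ne.symm hnb] using hD0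
  · intro m n hmn hm hn
    have key : ∀ k : ℕ, (Finsupp.single a e + Finsupp.single b f) k ≠ 0 → k = a ∨ k = b := by
      intro k hk
      by_contra hcon
      push_neg at hcon
      exact hk (by simp [Finsupp.add_apply, Finsupp.single_apply, Ne.symm hcon.1, Ne.symm hcon.2])
    rcases key m hm with rfl | rfl <;> rcases key n hn with rfl | rfl
    · exact absurd rfl hmn
    · exact hab
    · rwa [abs_sub_comm]
    · exact absurd rfl hmn
  · rw [evalue]
    rw [Finsupp.sum_add_index' (fun k => zero_mul (τ^k)) (fun k x y => add_mul x y (τ^k))]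
    rw [Finsupp.sum_single_index (zero_mul (τ^a)), Finsupp.sum_single_index (zero_mul (τ^b))]
    ring
  · have h1 : (Finsupp.single a e + Finsupp.single b f).support ⊆ {a, b} := by
      refine Finsupp.support_add.trans ?_
      apply Finset.union_subset
      · exact Finsupp.support_single_subset.trans (by simp)
      · exact Finsupp.support_single_subset.trans (by simp)
    calc eweight _ ≤ ({a, b} : Finset ℕ).card := Finset.card_le_card h1
      _ ≤ 2 := Finset.card_le_two

end auxiliary

set_option maxHeartbeats 1000000 in
/-- For `w ≥ 4` and `|p| ≥ 3`, the minimal norm representatives digit set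
modulo `τ^w` is `w`-subadditive. -/
theorem wsubadditive_of_large_w (p q : ℤ) (τ : ℂ)
    (hpq : p ^ 2 < 4 * q)
    (hroot : τ ^ 2 - (p : ℂ) * τ + (q : ℂ) = 0)
    (him : τ.im ≠ 0)
    (w : ℕ) (hw : 4 ≤ w) (hp : 3 ≤ |p|)
    (D : Set ℂ) (hD : IsMinNormDigitSet τ w D) :
    WSubadditive τ w D := by
  obtain ⟨hDsub, hD0, hDmin, hDex⟩ := hD
  obtain ⟨hre, him2⟩ := tau_re_im hroot him
  have hp9 : (9:ℤ) ≤ p^2 := by nlinarith [_root_.sq_abs p, hp, abs_nonneg p]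
  have hq3 : (3:ℤ) ≤ q := by nlinarith
  have hq3r : (3:ℝ) ≤ (q:ℝ) := by exact_mod_cast hq3
  have hpqr : ((p:ℝ))^2 < 4*(q:ℝ) := by exact_mod_cast hpq
  have hp9r : (9:ℝ) ≤ ((p:ℝ))^2 := by exact_mod_cast hp9
  have hY0 : (0:ℝ) < (q:ℝ) - (p:ℝ)^2/4 := by linarith
  set A := ‖τ‖ with hA
  have hnormSqτ : Complex.normSq τ = (q:ℝ) := by
    have h := normSq_formula (p := p) (q := q) hre him2 0 1
    simpa using h
  have hA2 : A^2 = (q:ℝ) := by rw [hA, Complex.sq_norm, hnormSqτ]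
  have hAnn : 0 ≤ A := norm_nonneg τ
  have hA1 : (1:ℝ) ≤ A := by nlinarith
  have hA0 : (0:ℝ) < A := by linarith
  have htau0 : τ ≠ 0 := by
    intro h
    rw [h, map_zero] at hnormSqτ
    have := hnormSqτ.symm
    linarith
  have hYval : τ.im^2 = (q:ℝ) - (p:ℝ)^2/4 := him2
  -- obtain the covering radius bound ρ
  obtain ⟨ρ, hρ0, hcovSq, hKIsq⟩ :
      ∃ ρ : ℝ, 0 < ρ ∧ (∀ ζ : ℂ, ∃ g ∈ Ztau τ, Complex.normSq (ζ - g) ≤ ρ^2) ∧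
        4*ρ^2*(A^3+2)^2 < A^8 := by
    rcases Int.even_or_odd p with ⟨r, hr⟩ | ⟨r, hr⟩
    · -- p even
      have hr' : p = 2*r := by omega
      have hcases : 3 ≤ p ∨ p ≤ -3 := by
        rcases abs_cases p with ⟨h1, _⟩ | ⟨h1, _⟩
        · left; omega
        · right; omega
      have h16 : (16:ℤ) ≤ p^2 := by
        rcases hcases with h | h
        · have : 2 ≤ r := by omega
          nlinarith
        · have : r ≤ -2 := by omega
          nlinarith
      have h17 : (17:ℤ) ≤ 4*q := by nlinarith
      have hq5 : (5:ℤ) ≤ q := by omega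
      have hq5r : (5:ℝ) ≤ (q:ℝ) := by exact_mod_cast hq5
      have hrsq0 : (0:ℝ) < (1 + τ.im^2)/4 := by positivity
      refine ⟨Real.sqrt ((1 + τ.im^2)/4), Real.sqrt_pos.mpr hrsq0, ?_, ?_⟩
      · intro ζ
        obtain ⟨g, hg, hle⟩ := covering_even hre him r hr' ζ
        refine ⟨g, hg, ?_⟩
        rwa [Real.sq_sqrt hrsq0.le]
      · rw [Real.sq_sqrt hrsq0.le]
        have h5r : (5:ℝ) ≤ A^2 := by rw [hA2]; exact hq5r
        have h16r : (16:ℝ) ≤ ((p:ℝ))^2 := by exact_mod_cast h16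
        have hY1 : τ.im^2 ≤ A^2 - 4 := by rw [hYval, hA2]; linarith
        have hKI := KIeven A (τ.im^2) hA0 h5r hY1
        calc 4*((1 + τ.im^2)/4)*(A^3+2)^2 = (1+τ.im^2)*(A^3+2)^2 := by ring
          _ < A^8 := hKI
    · -- p odd
      have hK : 1 ≤ q - r^2 - r := by nlinarith
      have h34 : (3:ℤ) ≤ 4*q - p^2 := by nlinarith
      have h34r : (3:ℝ) ≤ 4*(q:ℝ) - ((p:ℝ))^2 := by exact_mod_cast h34
      have hY34 : (3:ℝ)/4 ≤ τ.im^2 := by rw [hYval]; linarith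
      have hYpos : (0:ℝ) < τ.im^2 := by linarith
      have h4Y : (0:ℝ) < 4*τ.im^2 := by linarith
      have hrsq0 : (0:ℝ) < (τ.im^2+1/4)^2/(4*τ.im^2) := by positivity
      refine ⟨Real.sqrt ((τ.im^2+1/4)^2/(4*τ.im^2)), Real.sqrt_pos.mpr hrsq0, ?_, ?_⟩
      · intro ζ
        obtain ⟨g, hg, hle⟩ := covering_odd hre him r hr hY34 ζ
        refine ⟨g, hg, ?_⟩
        rwa [Real.sq_sqrt hrsq0.le]
      · rw [Real.sq_sqrt hrsq0.le]
        have h3r : (3:ℝ) ≤ A^2 := by rw [hA2]; exact hq3r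
        have hY1 : τ.im^2 ≤ A^2 - 9/4 := by rw [hYval, hA2]; linarith
        have hKI := KIodd A (τ.im^2) hA0 h3r hY34 hY1
        have e : 4*((τ.im^2+1/4)^2/(4*τ.im^2))*(A^3+2)^2
            = (τ.im^2+1/4)^2*(A^3+2)^2/(τ.im^2) := by
          field_simp
        rw [e, div_lt_iff₀ hYpos]
        calc (τ.im^2+1/4)^2*(A^3+2)^2 < A^8*τ.im^2 := hKI
          _ = A^8*τ.im^2 := rfl
  have hcov : ∀ ζ : ℂ, ∃ g ∈ Ztau τ, ‖ζ - g‖ ≤ ρ := by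
    intro ζ
    obtain ⟨g, hg, hle⟩ := hcovSq ζ
    refine ⟨g, hg, ?_⟩
    rw [Complex.norm_def]
    calc Real.sqrt (Complex.normSq (ζ-g)) ≤ Real.sqrt (ρ^2) := Real.sqrt_le_sqrt hle
      _ = ρ := Real.sqrt_sq hρ0.le
  have hKI : 2*ρ*(A^3+2) < A^4 := by
    have h1 : (2*ρ*(A^3+2))^2 < (A^4)^2 := by
      calc (2*ρ*(A^3+2))^2 = 4*ρ^2*(A^3+2)^2 := by ring
        _ < A^8 := hKIsq
        _ = (A^4)^2 := by ring
    exact lt_of_pow_lt_pow_left₀ 2 (by positivity) h1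
  have hKIw : ρ*(A^(w-1)+2) < A^w/2 := by
    have h1 : (1:ℝ) ≤ A^(w-4) := one_le_pow₀ hA1
    have e1 : A^(w-4)*A^4 = A^w := by rw [← pow_add]; congr 1; omega
    have e2 : A^(w-4)*A^3 = A^(w-1) := by rw [← pow_add]; congr 1; omega
    have step1 : ρ*(A^(w-1)+2) ≤ ρ*(A^(w-1)+2*A^(w-4)) :=
      mul_le_mul_of_nonneg_left (by linarith) hρ0.le
    have step2 : ρ*(A^(w-1)+2*A^(w-4)) = A^(w-4)*(ρ*(A^3+2)) := by rw [← e2]; ring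
    have step3 : A^(w-4)*(ρ*(A^3+2)) < A^(w-4)*(A^4/2) :=
      mul_lt_mul_of_pos_left (by linarith) (pow_pos hA0 _)
    have step4 : A^(w-4)*(A^4/2) = A^w/2 := by rw [← e1]; ring
    linarith
  -- digit bound
  have hdig : ∀ d ∈ D, d ≠ 0 → ‖d‖ ≤ ρ * A^w := by
    intro d hd hd0
    obtain ⟨g, hg, hgle⟩ := hcov (d / τ^w)
    have hmin := (hDmin d hd hd0).2.2 g hg
    have htw : τ^w ≠ 0 := pow_ne_zero _ htau0
    have he : d - τ^w * g = τ^w * (d/τ^w - g) := by field_simp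
    calc ‖d‖ ≤ ‖d - τ^w*g‖ := hmin
      _ = A^w * ‖d/τ^w - g‖ := by rw [he, norm_mul, norm_pow]
      _ ≤ A^w * ρ := mul_le_mul_of_nonneg_left hgle (pow_nonneg hAnn w)
      _ = ρ * A^w := mul_comm _ _
  -- digit-of lemma
  have hdigit_of : ∀ z ∈ Ztau τ, ¬TauDvd τ z → ∃ e, e ∈ D ∧ e ≠ 0 ∧
      ‖e‖ ≤ ‖z‖ ∧ ∃ yy ∈ Ztau τ, z = e + τ^w * yy := by
    intro z hz hnd
    obtain ⟨e, ⟨heD, yy, hyZ, hyeq⟩, -⟩ := hDex z hz hnd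
    have hze : z = e + τ^w * yy := by linear_combination hyeq
    have he0 : e ≠ 0 := by
      rintro rfl
      refine hnd ⟨τ^(w-1)*yy, Ztau_pow_mul hroot _ hyZ, ?_⟩
      have hzw : z = τ^w*yy := by linear_combination hyeq
      have hw1 : w - 1 + 1 = w := by omega
      rw [hzw]
      nth_rewrite 1 [← hw1]
      rw [pow_succ]
      ring
    have habs : ‖e‖ ≤ ‖z‖ := by
      have h := (hDmin e heD he0).2.2 (-yy) (Ztau_neg hyZ)
      calc ‖e‖ ≤ ‖e - τ^w * (-yy)‖ := h
        _ = ‖z‖ := by rw [hze]; ring_nf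
    exact ⟨e, heD, he0, habs, yy, hyZ, hze⟩
  -- strictness: small non-divisible elements are digits
  have hstrict : ∀ v ∈ Ztau τ, ¬TauDvd τ v → ‖v‖ < A^w/2 → v ∈ D := by
    intro v hv hnd hlt
    obtain ⟨f, hfD, hf0, hfle, y', hy'Z, hveq⟩ := hdigit_of v hv hnd
    by_cases hy'0 : y' = 0
    · rw [hveq, hy'0]
      simpa using hfD
    · exfalso
      have h1 : 1 ≤ ‖y'‖ := abs_one_le hre him2 hy'Z hy'0
      have h2 : ‖τ^w * y'‖ = A^w * ‖y'‖ := by rw [norm_mul, norm_pow]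
      have h3 : A^w ≤ A^w * ‖y'‖ :=
        le_mul_of_one_le_right (pow_nonneg hAnn w) h1
      have h4 : τ^w*y' = v - f := by rw [hveq]; ring
      have h5 : ‖v - f‖ ≤ ‖v‖ + ‖f‖ := by
        have h := norm_add_le v (-f)
        simpa [sub_eq_add_neg, norm_neg] using h
      have h6 : ‖v - f‖ = A^w * ‖y'‖ := by rw [← h4, h2]
      rw [h6] at h5
      linarith
  -- main auxiliary statement with n ≤ m
  have main : ∀ c ∈ D, ∀ d ∈ D, c ≠ 0 → d ≠ 0 → ∀ m n : ℕ, n ≤ m →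
      ∃ η : ℕ →₀ ℂ, IsExpansion D η ∧ IsWNAF w η ∧
        evalue τ η = τ ^ m * c + τ ^ n * d ∧ eweight η ≤ 2 := by
    intro c hc d hd hc0 hd0 m n hnm
    obtain ⟨k, hk⟩ : ∃ k, k = m - n := ⟨_, rfl⟩
    have hm : m = n + k := by omega
    by_cases hkw : w ≤ k
    · refine expansion_two D τ w (by omega) hD0 hc hd m n ?_
      have e : (m:ℤ) - n = (k:ℤ) := by omega
      rw [e, _root_.abs_of_nonneg (by positivity : (0:ℤ) ≤ (k:ℤ))]
      exact_mod_cast hkw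
    · push_neg at hkw
      obtain ⟨z, hz⟩ : ∃ z, z = τ^k * c + d := ⟨_, rfl⟩
      have hzZ : z ∈ Ztau τ := by
        rw [hz]; exact Ztau_add (Ztau_pow_mul hroot k (hDsub hc)) (hDsub hd)
      have hvz : τ^n * z = τ^m*c + τ^n*d := by rw [hz, hm, pow_add]; ring
      by_cases hz0 : z = 0
      · obtain ⟨η, h1, h2, h3, h4⟩ := expansion_zero D τ w hD0
        exact ⟨η, h1, h2, by rw [h3, ← hvz, hz0, mul_zero], h4⟩
      · obtain ⟨j, u, huZ, hund, hzu⟩ := tau_valuation hroot hre him2 hq3r z hzZ hz0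
        obtain ⟨e, heD, he0, heu, yy, hyZ, hue⟩ := hdigit_of u huZ hund
        by_cases hy0 : yy = 0
        · obtain ⟨η, h1, h2, h3, h4⟩ := expansion_single D τ w hD0 heD (n+j)
          refine ⟨η, h1, h2, ?_, h4⟩
          rw [h3, ← hvz, hzu, hue, hy0, mul_zero, add_zero, pow_add]
          ring
        · obtain ⟨i, v, hvZ, hvnd, hyv⟩ := tau_valuation hroot hre him2 hq3r yy hyZ hy0
          have hv0 : v ≠ 0 := by rintro rfl; rw [mul_zero] at hyv; exact hy0 hyv
          have hAw : (0:ℝ) < A^w := pow_pos hA0 w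
          have habc : ‖c‖ ≤ ρ*A^w := hdig c hc hc0
          have habd : ‖d‖ ≤ ρ*A^w := hdig d hd hd0
          have habe : ‖e‖ ≤ ρ*A^w := hdig e heD he0
          have hAk : A^k ≤ A^(w-1) := pow_le_pow_right₀ hA1 (by omega)
          have habz : ‖z‖ ≤ ρ*A^w*(A^(w-1)+1) := by
            have t1 : ‖z‖ ≤ ‖τ^k*c‖ + ‖d‖ := by
              rw [hz]; exact norm_add_le _ _
            have t2 : ‖τ^k*c‖ = A^k*‖c‖ := by rw [norm_mul, norm_pow]
            have t3 : A^k*‖c‖ ≤ A^(w-1)*(ρ*A^w) :=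
              mul_le_mul hAk habc (norm_nonneg c) (by positivity)
            calc ‖z‖ ≤ ‖τ^k*c‖ + ‖d‖ := t1
              _ = A^k*‖c‖ + ‖d‖ := by rw [t2]
              _ ≤ A^(w-1)*(ρ*A^w) + ρ*A^w := by linarith
              _ = ρ*A^w*(A^(w-1)+1) := by ring
          have habu : ‖u‖ ≤ ‖z‖ := by
            rw [hzu, norm_mul, norm_pow]
            have h1 : (1:ℝ) ≤ A^j := one_le_pow₀ hA1
            nlinarith [norm_nonneg u]
          have habyy : A^w * ‖yy‖ ≤ ‖u‖ + ‖e‖ := by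
            have e1 : τ^w*yy = u - e := by rw [hue]; ring
            have e5 : ‖u - e‖ ≤ ‖u‖ + ‖e‖ := by
              have h := norm_add_le u (-e)
              simpa [sub_eq_add_neg, norm_neg] using h
            calc A^w * ‖yy‖ = ‖τ^w*yy‖ := by rw [norm_mul, norm_pow]
              _ = ‖u - e‖ := by rw [e1]
              _ ≤ ‖u‖ + ‖e‖ := e5
          have habv : ‖v‖ ≤ ‖yy‖ := by
            rw [hyv, norm_mul, norm_pow]
            have h1 : (1:ℝ) ≤ A^i := one_le_pow₀ hA1
            nlinarith [norm_nonneg v]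
          have hvlt : ‖v‖ < A^w/2 := by
            have h1 : A^w * ‖yy‖ ≤ ρ*A^w*(A^(w-1)+1) + ρ*A^w := by linarith
            have e2 : ρ*A^w*(A^(w-1)+1) + ρ*A^w = (ρ*(A^(w-1)+2))*A^w := by ring
            have h2 : ‖yy‖ ≤ ρ*(A^(w-1)+2) := by
              have h3 : ‖yy‖ * A^w ≤ (ρ*(A^(w-1)+2))*A^w := by
                rw [← e2]; linarith
              exact le_of_mul_le_mul_right h3 hAw
            linarith
          have hvD : v ∈ D := hstrict v hvZ hvnd hvlt
          have habgap : (w:ℤ) ≤ |((n+j:ℕ):ℤ) - ((n+j+w+i:ℕ):ℤ)| := by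
            have e : ((n+j:ℕ):ℤ) - ((n+j+w+i:ℕ):ℤ) = -((w:ℤ)+(i:ℤ)) := by push_cast; ring
            rw [e, abs_neg, _root_.abs_of_nonneg (by positivity : (0:ℤ) ≤ (w:ℤ)+(i:ℤ))]
            have : (0:ℤ) ≤ (i:ℤ) := by positivity
            linarith
          obtain ⟨η, h1, h2, h3, h4⟩ :=
            expansion_two D τ w (by omega) hD0 heD hvD (n+j) (n+j+w+i) habgap
          refine ⟨η, h1, h2, ?_, h4⟩
          rw [h3, ← hvz, hzu, hue, hyv]
          rw [pow_add, pow_add, pow_add, pow_add]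
          ring
  intro c hc d hd hc0 hd0 m n
  rcases le_total n m with h | h
  · exact main c hc d hd hc0 hd0 m n h
  · obtain ⟨η, h1, h2, h3, h4⟩ := main d hd c hc hd0 hc0 n m h
    exact ⟨η, h1, h2, by rw [h3, add_comm], h4⟩
end
end

section
/- Let w = 3 and let D be a minimal norm representatives digit set modulo τ³. If either |p| ≥ 5, or |p| = 4 and 5 ≤ q ≤ 9, then D is 3-subadditive. -/
open Complex

noncomputable section

namespace WS

lemma mem_ztau_zero (τ : ℂ) : (0:ℂ) ∈ Ztau τ := ⟨0, 0, by simp⟩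

lemma mem_ztau_tau (τ : ℂ) : τ ∈ Ztau τ := ⟨0, 1, by simp⟩

lemma mem_ztau_add {τ z w : ℂ} (hz : z ∈ Ztau τ) (hw : w ∈ Ztau τ) : z + w ∈ Ztau τ := by
  obtain ⟨a,b,rfl⟩ := hz; obtain ⟨c,d,rfl⟩ := hw
  exact ⟨a+c, b+d, by push_cast; ring⟩

lemma mem_ztau_neg {τ z : ℂ} (hz : z ∈ Ztau τ) : -z ∈ Ztau τ := by
  obtain ⟨a,b,rfl⟩ := hz
  exact ⟨-a, -b, by push_cast; ring⟩

lemma mem_ztau_mul {p q : ℤ} {τ : ℂ} (hτ2 : τ^2 = (p:ℂ)*τ - (q:ℂ))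
    {z w : ℂ} (hz : z ∈ Ztau τ) (hw : w ∈ Ztau τ) : z * w ∈ Ztau τ := by
  obtain ⟨a,b,rfl⟩ := hz; obtain ⟨c,d,rfl⟩ := hw
  refine ⟨a*c - q*b*d, a*d + b*c + p*b*d, ?_⟩
  push_cast
  linear_combination ((b:ℂ)*(d:ℂ)) * hτ2

lemma mem_ztau_pow_mul {p q : ℤ} {τ : ℂ} (hτ2 : τ^2 = (p:ℂ)*τ - (q:ℂ))
    {z : ℂ} (hz : z ∈ Ztau τ) (k : ℕ) : τ^k * z ∈ Ztau τ := by
  induction k with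
  | zero => simpa using hz
  | succ k ih =>
      have : τ^(k+1) * z = τ * (τ^k * z) := by ring
      rw [this]
      exact mem_ztau_mul hτ2 (mem_ztau_tau τ) ih

lemma tau_facts {p q : ℤ} {τ : ℂ} (hroot : τ ^ 2 - (p : ℂ) * τ + (q : ℂ) = 0)
    (him : τ.im ≠ 0) : τ.re = (p:ℝ)/2 ∧ τ.im^2 = (q:ℝ) - (p:ℝ)^2/4 := by
  have h := hroot
  rw [Complex.ext_iff] at h
  simp [pow_two, Complex.mul_re, Complex.mul_im] at h
  obtain ⟨h1, h2⟩ := h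
  have hre : τ.re = (p:ℝ)/2 := by
    have h2' : τ.im * (2*τ.re - p) = 0 := by linarith
    rcases mul_eq_zero.mp h2' with h | h
    · exact absurd h him
    · linarith
  refine ⟨hre, ?_⟩
  nlinarith [h1]



lemma normSq_coords {p q : ℤ} {τ : ℂ} (hre : τ.re = (p:ℝ)/2)
    (him2 : τ.im^2 = (q:ℝ) - (p:ℝ)^2/4) (a b : ℤ) :
    Complex.normSq ((a:ℂ) + (b:ℂ)*τ) = ((a^2 + a*b*p + b^2*q : ℤ) : ℝ) := by
  rw [Complex.normSq_apply]
  simp [Complex.add_re, Complex.add_im, Complex.mul_re, Complex.mul_im, hre]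
  linear_combination ((b:ℝ)^2) * him2

lemma one_le_normSq {p q : ℤ} {τ : ℂ} (hre : τ.re = (p:ℝ)/2)
    (him2 : τ.im^2 = (q:ℝ) - (p:ℝ)^2/4)
    {z : ℂ} (hz : z ∈ Ztau τ) (h0 : z ≠ 0) : 1 ≤ Complex.normSq z := by
  obtain ⟨a, b, rfl⟩ := hz
  rw [normSq_coords hre him2]
  have hpos : (0:ℝ) < ((a^2 + a*b*p + b^2*q : ℤ) : ℝ) := by
    rcases lt_or_eq_of_le (Complex.normSq_nonneg ((a:ℂ) + (b:ℂ)*τ)) with h | h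
    · rwa [normSq_coords hre him2] at h
    · exact absurd (Complex.normSq_eq_zero.mp h.symm) h0
  have : (0:ℤ) < a^2 + a*b*p + b^2*q := by exact_mod_cast hpos
  exact_mod_cast this

lemma normSq_tau {p q : ℤ} {τ : ℂ} (hre : τ.re = (p:ℝ)/2)
    (him2 : τ.im^2 = (q:ℝ) - (p:ℝ)^2/4) : Complex.normSq τ = (q:ℝ) := by
  have := normSq_coords hre him2 0 1
  simpa using this

lemma strip {p q : ℤ} {τ : ℂ} (hre : τ.re = (p:ℝ)/2)
    (him2 : τ.im^2 = (q:ℝ) - (p:ℝ)^2/4) (hq2 : (2:ℝ) ≤ (q:ℝ)) :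
    ∀ N : ℕ, ∀ s : ℂ, s ∈ Ztau τ → s ≠ 0 → Complex.normSq s ≤ (N:ℝ) →
      ∃ (e : ℕ) (z : ℂ), z ∈ Ztau τ ∧ ¬ TauDvd τ z ∧ s = τ^e * z ∧
        Complex.normSq z ≤ Complex.normSq s := by
  intro N
  induction N with
  | zero =>
      intro s hs h0 hN
      exact absurd (Complex.normSq_eq_zero.mp
        (le_antisymm (by simpa using hN) (Complex.normSq_nonneg s))) h0
  | succ N ih =>
      intro s hs h0 hN
      by_cases hdvd : TauDvd τ s
      · obtain ⟨y, hy, rfl⟩ := hdvd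
        have hy0 : y ≠ 0 := by
          intro h; apply h0; rw [h]; simp
        have hns : Complex.normSq (τ*y) = (q:ℝ) * Complex.normSq y := by
          rw [Complex.normSq_mul, normSq_tau hre him2]
        have h1y : (1:ℝ) ≤ Complex.normSq y := one_le_normSq hre him2 hy hy0
        have hyN : Complex.normSq y ≤ (N:ℝ) := by
          have h2 : 2 * Complex.normSq y ≤ (q:ℝ) * Complex.normSq y :=
            mul_le_mul_of_nonneg_right hq2 (by linarith)
          have : (q:ℝ) * Complex.normSq y ≤ (N:ℝ) + 1 := by
            rw [← hns]; push_cast at hN ⊢; linarith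
          linarith
        obtain ⟨e, z, hz, hnd, heq, hle⟩ := ih y hy hy0 hyN
        refine ⟨e+1, z, hz, hnd, ?_, ?_⟩
        · rw [heq]; ring
        · rw [hns]; nlinarith [Complex.normSq_nonneg y]
      · exact ⟨0, s, hs, hdvd, by simp, le_refl _⟩

lemma covering {p q : ℤ} {τ : ℂ} (hre : τ.re = (p:ℝ)/2)
    (him2 : τ.im^2 = (q:ℝ) - (p:ℝ)^2/4) (him : τ.im ≠ 0) (x : ℂ) :
    ∃ w ∈ Ztau τ, Complex.normSq (x - w) ≤ ((4*q + 4 - p^2 : ℤ) : ℝ)/16 := by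
  set b : ℤ := round (x.im / τ.im) with hb_def
  set a : ℤ := round (x.re - (b:ℝ) * τ.re) with ha_def
  refine ⟨(a:ℂ) + (b:ℂ)*τ, ⟨a, b, rfl⟩, ?_⟩
  have hb : |x.im / τ.im - (b:ℝ)| ≤ 1/2 := abs_sub_round _
  have hb' : |x.im - (b:ℝ)*τ.im| ≤ |τ.im|/2 := by
    have : x.im - (b:ℝ)*τ.im = (x.im / τ.im - (b:ℝ)) * τ.im := by
      field_simp
      try ring
    rw [this, abs_mul]
    calc |x.im / τ.im - (b:ℝ)| * |τ.im| ≤ (1/2) * |τ.im| :=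
          mul_le_mul_of_nonneg_right hb (abs_nonneg _)
      _ = |τ.im|/2 := by ring
  have ha : |x.re - (b:ℝ)*τ.re - (a:ℝ)| ≤ 1/2 := abs_sub_round _
  have h1 : (x - ((a:ℂ) + (b:ℂ)*τ)).re = x.re - (b:ℝ)*τ.re - (a:ℝ) := by
    simp [Complex.sub_re, Complex.add_re, Complex.mul_re]; ring
  have h2 : (x - ((a:ℂ) + (b:ℂ)*τ)).im = x.im - (b:ℝ)*τ.im := by
    simp [Complex.sub_im, Complex.add_im, Complex.mul_im]
    try ring
  rw [Complex.normSq_apply, h1, h2]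
  have ha2 := abs_le.mp ha
  have hb2 := abs_le.mp hb'
  have him4 : (x.im - (b:ℝ)*τ.im)^2 ≤ τ.im^2/4 := by
    have habs : |τ.im|^2 = τ.im^2 := sq_abs _
    nlinarith [abs_nonneg τ.im, abs_nonneg (x.im - (b:ℝ)*τ.im),
      _root_.sq_abs (x.im - (b:ℝ)*τ.im)]
  push_cast
  nlinarith [ha2.1, ha2.2]




lemma digit_bound {p q : ℤ} {τ : ℂ} (hre : τ.re = (p:ℝ)/2)
    (him2 : τ.im^2 = (q:ℝ) - (p:ℝ)^2/4) (him : τ.im ≠ 0) (hτ0 : τ ≠ 0)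
    (hq0 : (0:ℝ) ≤ (q:ℝ)) {d : ℂ} (hd : MinNormRep τ 3 d) :
    Complex.normSq d ≤ (q:ℝ)^3 * (((4*q + 4 - p^2 : ℤ) : ℝ)/16) := by
  obtain ⟨hdz, hdnd, hmin⟩ := hd
  obtain ⟨w, hw, hcov⟩ := covering hre him2 him (d / τ^3)
  have habs : ‖d‖ ≤ ‖d - τ^3*w‖ := hmin w hw
  have heq : Complex.normSq (d - τ^3*w) = Complex.normSq τ^3 * Complex.normSq (d/τ^3 - w) := by
    rw [← map_pow, ← Complex.normSq_mul]
    congr 1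
    field_simp
  have h1 : Complex.normSq d ≤ Complex.normSq (d - τ^3*w) := by
    rw [← Complex.sq_norm, ← Complex.sq_norm (d - τ^3*w)]
    exact pow_le_pow_left₀ (norm_nonneg d) habs 2
  have hq' : Complex.normSq τ = (q:ℝ) := by
    rw [Complex.normSq_apply, hre]; linear_combination him2
  calc Complex.normSq d ≤ Complex.normSq (d - τ^3*w) := h1
    _ = Complex.normSq τ^3 * Complex.normSq (d/τ^3 - w) := heq
    _ ≤ (q:ℝ)^3 * (((4*q + 4 - p^2 : ℤ) : ℝ)/16) := by
        rw [hq']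
        apply mul_le_mul_of_nonneg_left hcov
        positivity

lemma good_single {D : Set ℂ} (τ : ℂ) (h0 : (0:ℂ) ∈ D) {d : ℂ} (hd : d ∈ D) (e : ℕ) :
    ∃ η : ℕ →₀ ℂ, IsExpansion D η ∧ IsWNAF 3 η ∧ evalue τ η = τ^e * d ∧ eweight η ≤ 2 := by
  refine ⟨Finsupp.single e d, ?_, ?_, ?_, ?_⟩
  · intro n
    rcases eq_or_ne n e with rfl | h
    · simpa using hd
    · rw [Finsupp.single_eq_of_ne' (Ne.symm h)]; exact h0
  · intro a b hab ha hb
    exfalso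
    have ha' : a = e := by
      by_contra h
      exact ha (Finsupp.single_eq_of_ne' (Ne.symm h))
    have hb' : b = e := by
      by_contra h
      exact hb (Finsupp.single_eq_of_ne' (Ne.symm h))
    exact hab (ha'.trans hb'.symm)
  · rw [evalue, Finsupp.sum_single_index (by simp)]; ring
  · calc eweight (Finsupp.single e d) ≤ 1 := by
          rw [eweight]
          exact Finset.card_le_card Finsupp.support_single_subset |>.trans (by simp)
      _ ≤ 2 := by norm_num

lemma good_pair {D : Set ℂ} (τ : ℂ) (h0 : (0:ℂ) ∈ D) {c d : ℂ} (hc : c ∈ D) (hd : d ∈ D)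
    {m n : ℕ} (hgap : (3:ℤ) ≤ (n:ℤ) - (m:ℤ)) :
    ∃ η : ℕ →₀ ℂ, IsExpansion D η ∧ IsWNAF 3 η ∧ evalue τ η = τ^m * c + τ^n * d ∧ eweight η ≤ 2 := by
  have hmn : m ≠ n := by
    intro h; rw [h] at hgap; omega
  set η : ℕ →₀ ℂ := Finsupp.single m c + Finsupp.single n d with hη
  have happ : ∀ k, η k = (if k = m then c else 0) + (if k = n then d else 0) := by
    intro k
    simp [hη, Finsupp.add_apply, Finsupp.single_apply, eq_comm]
  have hsupp : ∀ k, η k ≠ 0 → k = m ∨ k = n := by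
    intro k hk
    by_contra h
    push_neg at h
    apply hk
    rw [happ k, if_neg h.1, if_neg h.2, add_zero]
  refine ⟨η, ?_, ?_, ?_, ?_⟩
  · intro k
    rw [happ k]
    rcases eq_or_ne k m with rfl | h1
    · rw [if_pos rfl, if_neg hmn, add_zero]; exact hc
    · rw [if_neg h1]
      rcases eq_or_ne k n with rfl | h2
      · rw [if_pos rfl, zero_add]; exact hd
      · rw [if_neg h2, add_zero]; exact h0
  · intro a b hab ha hb
    rcases hsupp a ha with rfl | rfl <;> rcases hsupp b hb with rfl | rfl
    · exact absurd rfl hab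
    · rw [abs_sub_comm]
      push_cast
      exact le_trans (by exact_mod_cast hgap) (le_abs_self _)
    · push_cast
      exact le_trans (by exact_mod_cast hgap) (le_abs_self _)
    · exact absurd rfl hab
  · rw [evalue, Finsupp.sum_add_index' (by intro i; simp) (by intro i x y; ring),
      Finsupp.sum_single_index (by simp), Finsupp.sum_single_index (by simp)]
    ring
  · rw [eweight]
    calc η.support.card ≤ ((Finsupp.single m c).support ∪ (Finsupp.single n d).support).card :=
          Finset.card_le_card Finsupp.support_add
      _ ≤ (Finsupp.single m c).support.card + (Finsupp.single n d).support.card :=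
          Finset.card_union_le _ _
      _ ≤ 1 + 1 := by
          gcongr <;>
            exact (Finset.card_le_card Finsupp.support_single_subset).trans (by simp)
      _ ≤ 2 := by norm_num

lemma keyineq {p q : ℤ} (hpq : p ^ 2 < 4 * q)
    (hp : 5 ≤ |p| ∨ (|p| = 4 ∧ 5 ≤ q ∧ q ≤ 9)) :
    (q+2)^2 * (4*q+4-p^2) < 4*q^3 ∧ 5 ≤ q := by
  rcases hp with h | ⟨h, h5, h9⟩
  · have hp2 : 25 ≤ p^2 := by
      have : (5:ℤ)^2 ≤ |p|^2 := by
        apply pow_le_pow_left₀ (by norm_num) h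
      rwa [_root_.sq_abs] at this
    have hq : 7 ≤ q := by nlinarith
    constructor
    · have h1 : 4*q+4-p^2 ≤ 4*q-21 := by linarith
      have h2 : (q+2)^2 * (4*q+4-p^2) ≤ (q+2)^2 * (4*q-21) :=
        mul_le_mul_of_nonneg_left h1 (sq_nonneg _)
      nlinarith
    · linarith
  · have hp2 : p^2 = 16 := by
      rw [← _root_.sq_abs, h]; norm_num
    constructor
    · nlinarith
    · exact h5

end WS

set_option maxHeartbeats 1000000 in
/-- For `w = 3`: if `|p| ≥ 5`, or `|p| = 4` and `5 ≤ q ≤ 9`, then the minimal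
norm representatives digit set modulo `τ³` is `3`-subadditive. -/
theorem wsubadditive_w3 (p q : ℤ) (τ : ℂ)
    (hpq : p ^ 2 < 4 * q)
    (hroot : τ ^ 2 - (p : ℂ) * τ + (q : ℂ) = 0)
    (him : τ.im ≠ 0)
    (hp : 5 ≤ |p| ∨ (|p| = 4 ∧ 5 ≤ q ∧ q ≤ 9))
    (D : Set ℂ) (hD : IsMinNormDigitSet τ 3 D) :
    WSubadditive τ 3 D := by
  obtain ⟨hre, him2⟩ := WS.tau_facts hroot him
  obtain ⟨hkey, hq5⟩ := WS.keyineq hpq hp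
  have hτ2 : τ^2 = (p:ℂ)*τ - (q:ℂ) := by linear_combination hroot
  have hqR : (5:ℝ) ≤ (q:ℝ) := by exact_mod_cast hq5
  have hq0 : (0:ℝ) < (q:ℝ) := by linarith
  have hnsτ : Complex.normSq τ = (q:ℝ) := WS.normSq_tau hre him2
  have hτ0 : τ ≠ 0 := by
    intro h
    rw [h, map_zero] at hnsτ
    linarith
  obtain ⟨hDsub, hD0, hDmin, hDres⟩ := hD
  set t : ℝ := Real.sqrt q with ht
  have ht2 : t^2 = (q:ℝ) := Real.sq_sqrt hq0.le
  have ht0 : 0 < t := Real.sqrt_pos.mpr hq0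
  have habsτ : ‖τ‖ = t := by rw [Complex.norm_def, hnsτ]
  have ht1 : 1 ≤ t := by nlinarith
  set R2 : ℝ := ((4*q + 4 - p^2 : ℤ) : ℝ)/16 with hR2
  have hR2pos : 0 ≤ R2 := by
    have h1 : (0:ℤ) ≤ 4*q+4-p^2 := by linarith
    have h2 : (0:ℝ) ≤ ((4*q + 4 - p^2 : ℤ) : ℝ) := by exact_mod_cast h1
    rw [hR2]; linarith
  set Bd : ℝ := Real.sqrt ((q:ℝ)^3 * R2) with hBd
  have hBd0 : 0 ≤ Bd := Real.sqrt_nonneg _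
  have hBd2 : Bd^2 = (q:ℝ)^3 * R2 := Real.sq_sqrt (by positivity)
  have hdig : ∀ d ∈ D, ‖d‖ ≤ Bd := by
    intro d hdD
    rcases eq_or_ne d 0 with rfl | hd0
    · simpa using hBd0
    · have h1 := WS.digit_bound hre him2 him hτ0 hq0.le (hDmin d hdD hd0)
      rw [Complex.norm_def, hBd]
      exact Real.sqrt_le_sqrt h1
  have hnum : ((q:ℝ) + 2) * Bd < (q:ℝ)^3 / 2 := by
    have hcast : ((q:ℝ)+2)^2 * (4*(q:ℝ)+4-(p:ℝ)^2) < 4*(q:ℝ)^3 := by exact_mod_cast hkey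
    have h1 : (((q:ℝ)+2)*Bd)^2 < ((q:ℝ)^3/2)^2 := by
      rw [mul_pow, hBd2, hR2]
      push_cast
      nlinarith [pow_pos hq0 3, sq_nonneg ((q:ℝ)+2)]
    have h2 : 0 ≤ (q:ℝ)^3/2 := by positivity
    exact lt_of_pow_lt_pow_left₀ 2 h2 h1
  have aux : ∀ c ∈ D, ∀ d ∈ D, ∀ m n : ℕ, m ≤ n →
      ∃ η : ℕ →₀ ℂ, IsExpansion D η ∧ IsWNAF 3 η ∧
        evalue τ η = τ ^ m * c + τ ^ n * d ∧ eweight η ≤ 2 := by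
    intro c hcD d hdD m n hmn
    by_cases hgap : m + 3 ≤ n
    · exact WS.good_pair τ hD0 hcD hdD (by push_cast; omega)
    · push_neg at hgap
      set j : ℕ := n - m with hj
      have hnj : n = m + j := by omega
      have hj2 : j ≤ 2 := by omega
      set s : ℂ := c + τ^j * d with hs
      have hval : τ ^ m * c + τ ^ n * d = τ^m * s := by
        rw [hs, hnj, pow_add]; ring
      have hsZ : s ∈ Ztau τ :=
        WS.mem_ztau_add (hDsub hcD) (WS.mem_ztau_pow_mul hτ2 (hDsub hdD) j)
      have habs_s : ‖s‖ ≤ (1 + (q:ℝ)) * Bd := by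
        have h1 : ‖τ^j*d‖ = t^j * ‖d‖ := by
          rw [norm_mul, norm_pow, habsτ]
        have h2 : t^j ≤ (q:ℝ) := by
          calc t^j ≤ t^2 := pow_le_pow_right₀ ht1 hj2
            _ = (q:ℝ) := ht2
        calc ‖s‖ ≤ ‖c‖ + ‖τ^j * d‖ := by
              rw [hs]; exact norm_add_le _ _
          _ ≤ Bd + (q:ℝ) * Bd := by
              rw [h1]
              have h3 := hdig c hcD
              have h4 := hdig d hdD
              have h5 : t^j * ‖d‖ ≤ (q:ℝ) * Bd := by
                apply mul_le_mul h2 h4 (norm_nonneg d) hq0.le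
              linarith
          _ = (1+(q:ℝ))*Bd := by ring
      rcases eq_or_ne s 0 with hs0 | hs0
      · refine ⟨0, ?_, ?_, ?_, ?_⟩
        · intro k; simpa using hD0
        · intro a b hab ha hb; simp at ha
        · rw [hval, hs0, mul_zero, evalue, Finsupp.sum_zero_index]
        · simp [eweight]
      · obtain ⟨e, z, hzZ, hznd, hsz, hzle⟩ :=
          WS.strip hre him2 (by linarith) ⌈Complex.normSq s⌉₊ s hsZ hs0 (Nat.le_ceil _)
        have hz0 : z ≠ 0 := by intro h; apply hs0; rw [hsz, h, mul_zero]
        have habs_z : ‖z‖ ≤ (1+(q:ℝ)) * Bd := by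
          have : ‖z‖ ≤ ‖s‖ := by
            rw [Complex.norm_def, Complex.norm_def]
            exact Real.sqrt_le_sqrt hzle
          linarith
        obtain ⟨d₀, hd₀D, y, hyZ, hzy⟩ := (hDres z hzZ hznd).exists
        have hd₀0 : d₀ ≠ 0 := by
          rintro rfl
          apply hznd
          refine ⟨τ^2*y, WS.mem_ztau_pow_mul hτ2 hyZ 2, ?_⟩
          have : z = τ^3*y := by linear_combination hzy
          rw [this]; ring
        rcases eq_or_ne y 0 with hy0 | hy0
        · have hzd : z = d₀ := by
            rw [hy0, mul_zero] at hzy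
            linear_combination hzy
          obtain ⟨η, h1, h2, h3, h4⟩ := WS.good_single τ hD0 hd₀D (m+e)
          refine ⟨η, h1, h2, ?_, h4⟩
          rw [h3, hval, hsz, hzd, pow_add]; ring
        · have habs_y : t^3 * ‖y‖ ≤ ((q:ℝ)+2) * Bd := by
            have h1 : ‖z - d₀‖ = t^3 * ‖y‖ := by
              rw [hzy, norm_mul, norm_pow, habsτ]
            have h2 : ‖z - d₀‖ ≤ ‖z‖ + ‖d₀‖ := by
              calc ‖z - d₀‖ ≤ ‖z‖ + ‖-d₀‖ := by
                    rw [sub_eq_add_neg]; exact norm_add_le _ _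
                _ = ‖z‖ + ‖d₀‖ := by rw [norm_neg]
            have h3 := hdig d₀ hd₀D
            nlinarith [norm_nonneg y]
          obtain ⟨k, u, huZ, hund, hyu, hule⟩ :=
            WS.strip hre him2 (by linarith) ⌈Complex.normSq y⌉₊ y hyZ hy0 (Nat.le_ceil _)
          have habs_u : ‖u‖ < t^3 / 2 := by
            have h1 : ‖u‖ ≤ ‖y‖ := by
              rw [Complex.norm_def, Complex.norm_def]
              exact Real.sqrt_le_sqrt hule
            have ht3 : 0 < t^3 := by positivity
            have ht6 : t^3 * t^3 = (q:ℝ)^3 := by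
              have : (t^2)^3 = (q:ℝ)^3 := by rw [ht2]
              nlinarith [this]
            nlinarith [norm_nonneg u, norm_nonneg y]
          obtain ⟨d₁, hd₁D, v, hvZ, huv⟩ := (hDres u huZ hund).exists
          have habs_d₁ : ‖d₁‖ ≤ ‖u‖ := by
            rcases eq_or_ne d₁ 0 with rfl | hd₁0
            · simp
            · have hmin := (hDmin d₁ hd₁D hd₁0).2.2 (-v) (WS.mem_ztau_neg hvZ)
              have : d₁ - τ^3 * (-v) = u := by linear_combination -huv
              rwa [this] at hmin
          have hv0 : v = 0 := by
            by_contra hv0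
            have h1 : (1:ℝ) ≤ Complex.normSq v := WS.one_le_normSq hre him2 hvZ hv0
            have h2 : ‖u - d₁‖ = t^3 * ‖v‖ := by
              rw [huv, norm_mul, norm_pow, habsτ]
            have h3 : ‖u - d₁‖ ≤ ‖u‖ + ‖d₁‖ := by
              calc ‖u - d₁‖ ≤ ‖u‖ + ‖-d₁‖ :=
                    by rw [sub_eq_add_neg]; exact norm_add_le _ _
                _ = ‖u‖ + ‖d₁‖ := by rw [norm_neg]
            have h4 : (1:ℝ) ≤ ‖v‖ := by
              rw [Complex.norm_def]
              exact Real.one_le_sqrt.mpr h1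
            have ht3 : 0 < t^3 := by positivity
            nlinarith
          have huD : u ∈ D := by
            have : u = d₁ := by rw [hv0, mul_zero] at huv; linear_combination huv
            rwa [this]
          obtain ⟨η, h1, h2, h3, h4⟩ :=
            WS.good_pair τ hD0 hd₀D huD (m := m+e) (n := m+e+3+k) (by push_cast; omega)
          refine ⟨η, h1, h2, ?_, h4⟩
          rw [h3, hval, hsz]
          have hzexp : z = d₀ + τ^3 * (τ^k * u) := by
            rw [← hyu]; linear_combination hzy
          rw [hzexp]
          simp only [pow_add]
          ring
  intro c hcD d hdD hc0 hd0 m n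
  rcases le_total m n with h | h
  · exact aux c hcD d hdD m n h
  · obtain ⟨η, h1, h2, h3, h4⟩ := aux d hdD c hcD n m h
    exact ⟨η, h1, h2, by rw [h3]; ring, h4⟩
end
end

section
/- Let τ = 1 + i, let w ≥ 3 be an odd integer and D a minimal norm representatives digit set modulo τ^w. Then every z ∈ τ^w·V ∩ ℤ[i] (where τ^w·V = {τ^w·v : v ∈ V}) can be written as z = τ^ℓ·d for some ℓ ∈ ℕ and some d ∈ D; in particular every such z is the value of a w-NAF-expansion of weight at most 1. -/
open Complex

noncomputable section

/-- The Voronoi cell of `0` for the lattice `ℤ[τ]`. -/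
def VoronoiCell (τ : ℂ) : Set ℂ :=
  {z | ∀ y ∈ Ztau τ, ‖z‖ ≤ ‖z - y‖}

/- ## Auxiliary lemmas -/

lemma mem_Ztau_iff (z : ℂ) : z ∈ Ztau (1+I) ↔ ∃ a b : ℤ, z = (a:ℂ) + b*I := by
  constructor
  · rintro ⟨a, b, rfl⟩; exact ⟨a + b, b, by push_cast; ring⟩
  · rintro ⟨a, b, rfl⟩; exact ⟨a - b, b, by push_cast; ring⟩

lemma Ztau_mul {z₁ z₂ : ℂ} (h₁ : z₁ ∈ Ztau (1+I)) (h₂ : z₂ ∈ Ztau (1+I)) :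
    z₁ * z₂ ∈ Ztau (1+I) := by
  rw [mem_Ztau_iff] at *
  obtain ⟨a, b, rfl⟩ := h₁; obtain ⟨c, d, rfl⟩ := h₂
  exact ⟨a*c - b*d, a*d + b*c, by push_cast; ring_nf; rw [Complex.I_sq]; ring⟩

lemma Ztau_I : I ∈ Ztau (1+I) := (mem_Ztau_iff I).mpr ⟨0, 1, by simp⟩

lemma Ztau_neg_s13 {z : ℂ} (h : z ∈ Ztau (1+I)) : -z ∈ Ztau (1+I) := by
  rw [mem_Ztau_iff] at *
  obtain ⟨a, b, rfl⟩ := h; exact ⟨-a, -b, by push_cast; ring⟩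

lemma Ztau_pow {z : ℂ} (h : z ∈ Ztau (1+I)) (n : ℕ) : z^n ∈ Ztau (1+I) := by
  induction n with
  | zero => exact (mem_Ztau_iff 1).mpr ⟨1, 0, by simp⟩
  | succ n ih => rw [pow_succ]; exact Ztau_mul ih h

lemma tauDvd_iff (a b : ℤ) : TauDvd (1+I) ((a:ℂ) + b*I) ↔ Even (a + b) := by
  constructor
  · rintro ⟨y, hy, he⟩
    rw [mem_Ztau_iff] at hy
    obtain ⟨c, d, rfl⟩ := hy
    have h1 : (a:ℂ) + b*I = (c - d : ℤ) + ((c + d : ℤ):ℂ)*I := by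
      rw [he]; push_cast; ring_nf; rw [Complex.I_sq]; ring
    have h2 : a = c - d ∧ b = c + d := by
      have := h1
      rw [Complex.ext_iff] at this
      simp at this
      exact_mod_cast this
    obtain ⟨rfl, rfl⟩ := h2
    exact ⟨c, by ring⟩
  · rintro ⟨c, hc⟩
    refine ⟨(c:ℂ) + ((b - c:ℤ):ℂ)*I, (mem_Ztau_iff _).mpr ⟨c, b - c, rfl⟩, ?_⟩
    have ha : ((a:ℤ):ℂ) = 2*(c:ℂ) - b := by
      have h : a = 2*c-b := by omega
      exact_mod_cast h
    rw [ha]; push_cast; ring_nf; rw [Complex.I_sq]; ring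

lemma addI_eq_zero (a b : ℤ) : (a:ℂ) + b*I = 0 ↔ a = 0 ∧ b = 0 := by
  constructor
  · intro h
    have := h
    rw [Complex.ext_iff] at this
    simp at this
    exact_mod_cast this
  · rintro ⟨rfl, rfl⟩; simp

lemma exists_val : ∀ n : ℕ, ∀ a b : ℤ, a^2 + b^2 ≤ (n:ℤ) → ((a:ℂ)+b*I) ≠ 0 →
    ∃ ℓ : ℕ, ∃ z' ∈ Ztau (1+I), ¬TauDvd (1+I) z' ∧ (a:ℂ)+b*I = (1+I)^ℓ * z' := by
  intro n
  induction n using Nat.strong_induction_on with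
  | _ n ih =>
    intro a b hn hz
    by_cases hpar : Even (a+b)
    · obtain ⟨t, ht⟩ := hpar
      obtain ⟨c, d, hbd0⟩ : ∃ c d : ℤ, c = t ∧ d = (b-a)/2 := ⟨t, (b-a)/2, rfl, rfl⟩
      have hbd : 2*d = b - a := by omega
      have hca : c - d = a := by omega
      have hcb : c + d = b := by omega
      have hfac : (a:ℂ) + b*I = (1+I) * ((c:ℂ) + d*I) := by
        have : ((c:ℂ) - d) + ((c:ℂ)+d)*I = (1+I)*((c:ℂ)+d*I) := by
          ring_nf; rw [Complex.I_sq]; ring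
        rw [← this]
        rw [show ((c:ℂ) - d) = ((a:ℤ):ℂ) from by exact_mod_cast congrArg (fun x : ℤ => (x:ℂ)) hca,
            show ((c:ℂ) + d) = ((b:ℤ):ℂ) from by exact_mod_cast congrArg (fun x : ℤ => (x:ℂ)) hcb]
      have hcd0 : ¬(c = 0 ∧ d = 0) := by
        rintro ⟨h1, h2⟩
        apply hz
        rw [(addI_eq_zero a b)]
        constructor <;> omega
      have hsq : 2*(c^2+d^2) = a^2+b^2 := by rw [← hca, ← hcb]; ring
      have hpos : 1 ≤ c^2 + d^2 := by
        rcases (not_and_or.mp hcd0) with h | h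
        · nlinarith [sq_nonneg d, Int.one_le_abs h, _root_.sq_abs c]
        · nlinarith [sq_nonneg c, Int.one_le_abs h, _root_.sq_abs d]
      have hlt : c^2 + d^2 ≤ ((n-1 : ℕ):ℤ) := by
        have hn1 : 1 ≤ n := by
          by_contra h
          have : n = 0 := by omega
          subst this
          simp at hn
          nlinarith
        push_cast [hn1]
        omega
      have hne : ((c:ℂ) + d*I) ≠ 0 := by
        rw [Ne, addI_eq_zero]
        tauto
      have hnlt : n - 1 < n := by
        have : 1 ≤ n := by
          by_contra h
          have : n = 0 := by omega
          subst this; simp at hn; nlinarith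
        omega
      obtain ⟨ℓ, z', hz'm, hz'd, hz'e⟩ := ih (n-1) hnlt c d hlt hne
      exact ⟨ℓ+1, z', hz'm, hz'd, by rw [hfac, hz'e, pow_succ]; ring⟩
    · exact ⟨0, (a:ℂ)+b*I, (mem_Ztau_iff _).mpr ⟨a, b, rfl⟩,
        fun h => hpar ((tauDvd_iff a b).mp h), by simp⟩

lemma two_I : ((1:ℂ)+I)^2 = 2*I := by
  rw [add_sq, Complex.I_sq]; ring

lemma tau_pow_mul (k : ℕ) (h : ℂ) : (1+I)^(2*k+1) * (h * (-I)^k) = 2^k * ((1+I) * h) := by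
  rw [pow_succ, pow_mul, two_I]
  have h1 : ((2:ℂ)*I)^k * (1+I) * (h * (-I)^k) = (((2:ℂ)*I)*(-I))^k * ((1+I)*h) := by
    rw [mul_pow ((2:ℂ)*I) (-I)]; ring
  rw [h1, show ((2:ℂ)*I)*(-I) = 2 from by
    rw [show ((2:ℂ)*I)*(-I) = -(2*(I*I)) from by ring, Complex.I_mul_I]; ring]

lemma abs_le_abs_iff' (a b c d : ℝ) :
    ‖(a:ℂ) + b*I‖ ≤ ‖(c:ℂ) + d*I‖ ↔ a^2+b^2 ≤ c^2+d^2 := by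
  rw [Complex.norm_def, Complex.norm_def, Complex.normSq_add_mul_I, Complex.normSq_add_mul_I,
    Real.sqrt_le_sqrt_iff (by positivity)]

lemma abs_eq_abs_iff' (a b c d : ℝ) :
    ‖(a:ℂ) + b*I‖ = ‖(c:ℂ) + d*I‖ ↔ a^2+b^2 = c^2+d^2 := by
  rw [Complex.norm_def, Complex.norm_def, Complex.normSq_add_mul_I, Complex.normSq_add_mul_I,
    Real.sqrt_inj (by positivity) (by positivity)]

lemma complex_rewrite (k : ℕ) (a b p q : ℤ) :
    ((a:ℂ)+b*I) - 2^k*((1+I)*((p:ℂ)+q*I)) =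
      (((a - 2^k*(p-q) : ℤ):ℝ):ℂ) + (((b - 2^k*(p+q) : ℤ):ℝ):ℂ)*I := by
  push_cast; ring_nf; rw [Complex.I_sq]; ring

lemma complex_rewrite0 (a b : ℤ) : ((a:ℂ)+b*I) = (((a:ℤ):ℝ):ℂ) + (((b:ℤ):ℝ):ℂ)*I := by
  push_cast; ring

lemma key_ineq (k : ℕ) (a b p q : ℤ)
    (h : ‖(a:ℂ)+b*I‖ ≤ ‖((a:ℂ)+b*I) - 2^k*((1+I)*((p:ℂ)+q*I))‖) :
    a*(p-q) + b*(p+q) ≤ 2^k*(p^2+q^2) := by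
  rw [complex_rewrite, complex_rewrite0, abs_le_abs_iff'] at h
  push_cast at h
  have hM : (0:ℝ) < 2^k := by positivity
  have h2 : (2:ℝ)^k * ((a:ℝ)*(p-q)+b*(p+q)) ≤ (2:ℝ)^k * ((2:ℝ)^k*((p:ℝ)^2+q^2)) := by
    nlinarith [h]
  have h3 : ((a:ℝ)*(p-q)+b*(p+q)) ≤ (2:ℝ)^k*((p:ℝ)^2+q^2) := le_of_mul_le_mul_left h2 hM
  exact_mod_cast h3

lemma key_eq (k : ℕ) (a b p q : ℤ)
    (h : ‖(a:ℂ)+b*I‖ = ‖((a:ℂ)+b*I) - 2^k*((1+I)*((p:ℂ)+q*I))‖) :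
    a*(p-q) + b*(p+q) = 2^k*(p^2+q^2) := by
  rw [complex_rewrite, complex_rewrite0, abs_eq_abs_iff'] at h
  push_cast at h
  have hM : (0:ℝ) < 2^k := by positivity
  have h2 : (2:ℝ)^k * ((a:ℝ)*(p-q)+b*(p+q)) = (2:ℝ)^k * ((2:ℝ)^k*((p:ℝ)^2+q^2)) := by
    nlinarith [h]
  have h3 : ((a:ℝ)*(p-q)+b*(p+q)) = (2:ℝ)^k*((p:ℝ)^2+q^2) := mul_left_cancel₀ hM.ne' h2
  exact_mod_cast h3

lemma final_contra (k : ℕ) (hk : 1 ≤ k) (a b p q : ℤ) (hpq : ¬(p = 0 ∧ q = 0))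
    (hodd : ¬ Even (a+b))
    (h1 : a + b ≤ 2^k) (h2 : -a - b ≤ 2^k) (h3 : -a + b ≤ 2^k) (h4 : a - b ≤ 2^k)
    (heq : a*(p-q)+b*(p+q) = 2^k*(p^2+q^2)) : False := by
  obtain ⟨m, hm⟩ : ∃ m : ℤ, (2:ℤ)^k = 2*m := ⟨2^(k-1), by rw [← pow_succ']; congr 1; omega⟩
  have hM : (0:ℤ) < 2^k := by positivity
  have hab1 : |a+b| ≤ 2^k := abs_le.mpr ⟨by omega, h1⟩
  have hab2 : |a-b| ≤ 2^k := abs_le.mpr ⟨by omega, h4⟩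
  have e1 : p*(a+b) ≤ |p| * 2^k := by
    calc p*(a+b) ≤ |p*(a+b)| := le_abs_self _
    _ = |p| * |a+b| := abs_mul _ _
    _ ≤ |p| * 2^k := mul_le_mul_of_nonneg_left hab1 (abs_nonneg p)
  have e2 : -(q*(a-b)) ≤ |q| * 2^k := by
    calc -(q*(a-b)) ≤ |(-(q*(a-b)))| := le_abs_self _
    _ = |q| * |a-b| := by rw [abs_neg, abs_mul]
    _ ≤ |q| * 2^k := mul_le_mul_of_nonneg_left hab2 (abs_nonneg q)
  have hkey : 2^k*(p^2+q^2) ≤ 2^k*(|p|+|q|) := by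
    have : a*(p-q)+b*(p+q) = p*(a+b) - q*(a-b) := by ring
    nlinarith [e1, e2]
  have hsum : p^2+q^2 ≤ |p|+|q| := le_of_mul_le_mul_left hkey hM
  have hp : |p| ≤ 1 := by
    rcases eq_or_ne p 0 with rfl | hp0
    · simp
    · have h5 := Int.one_le_abs hp0
      rcases eq_or_ne q 0 with rfl | hq0
      · simp only [abs_zero] at hsum
        nlinarith [_root_.sq_abs p]
      · have h6 := Int.one_le_abs hq0
        nlinarith [_root_.sq_abs p, _root_.sq_abs q]
  have hq : |q| ≤ 1 := by
    rcases eq_or_ne q 0 with rfl | hq0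
    · simp
    · have h6 := Int.one_le_abs hq0
      rcases eq_or_ne p 0 with rfl | hp0
      · simp only [abs_zero] at hsum
        nlinarith [_root_.sq_abs q]
      · have h5 := Int.one_le_abs hp0
        nlinarith [_root_.sq_abs p, _root_.sq_abs q]
  have hp' : -1 ≤ p ∧ p ≤ 1 := abs_le.mp hp
  have hq' : -1 ≤ q ∧ q ≤ 1 := abs_le.mp hq
  have hoddm : (a+b) % 2 = 1 := Int.not_even_iff.mp hodd
  obtain ⟨hp1, hp2⟩ := hp'
  obtain ⟨hq1, hq2⟩ := hq'
  interval_cases p <;> interval_cases q <;> omega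

lemma tau_ne_zero : (1:ℂ) + I ≠ 0 := by
  intro h
  rw [Complex.ext_iff] at h
  simp at h

/-- For `τ = 1 + i` and odd `w ≥ 3`: every lattice point in `τ^w·V` is of the
form `τ^ℓ·d` with `d ∈ D`; in particular it has a `w`-NAF-expansion of weight
at most `1`. -/
theorem lattice_point_in_scaled_voronoi_is_shifted_digit
    (w : ℕ) (hw : 3 ≤ w) (hwodd : Odd w)
    (D : Set ℂ) (hD : IsMinNormDigitSet (1 + Complex.I) w D) :
    ∀ z ∈ Ztau (1 + Complex.I),
      (∃ v ∈ VoronoiCell (1 + Complex.I), z = (1 + Complex.I) ^ w * v) →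
      (∃ ℓ : ℕ, ∃ d ∈ D, z = (1 + Complex.I) ^ ℓ * d) ∧
      (∃ η : ℕ →₀ ℂ, IsExpansion D η ∧ IsWNAF w η ∧
        evalue (1 + Complex.I) η = z ∧ eweight η ≤ 1) := by
  intro z hzm hv
  obtain ⟨v, hvV, hzv⟩ := hv
  have Hz : ∀ y ∈ Ztau (1+I), ‖z‖ ≤ ‖z - (1+I)^w * y‖ := by
    intro y hy
    rw [hzv, show (1+I)^w * v - (1+I)^w * y = (1+I)^w * (v - y) from by ring,
      norm_mul, norm_mul]
    exact mul_le_mul_of_nonneg_left (hvV y hy) (norm_nonneg _)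
  -- A helper to build the singleton expansion
  have mk_exp : ∀ (ℓ : ℕ) (d : ℂ), d ∈ D → z = (1+I)^ℓ * d →
      (∃ ℓ : ℕ, ∃ d ∈ D, z = (1 + Complex.I) ^ ℓ * d) ∧
      (∃ η : ℕ →₀ ℂ, IsExpansion D η ∧ IsWNAF w η ∧
        evalue (1 + Complex.I) η = z ∧ eweight η ≤ 1) := by
    intro ℓ d hdD hzd
    refine ⟨⟨ℓ, d, hdD, hzd⟩, Finsupp.single ℓ d, ?_, ?_, ?_, ?_⟩
    · intro n
      rw [Finsupp.single_apply]
      split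
      · exact hdD
      · exact hD.2.1
    · intro m n hmn hm hn
      exfalso
      rw [Finsupp.single_apply] at hm hn
      apply hmn
      by_cases h1 : ℓ = m
      · by_cases h2 : ℓ = n
        · omega
        · simp [h2] at hn
      · simp [h1] at hm
    · rw [evalue, Finsupp.sum_single_index (by simp), hzd]
      ring
    · exact le_trans (Finset.card_le_card Finsupp.support_single_subset) (by simp)
  by_cases hz0 : z = 0
  · exact mk_exp 0 0 hD.2.1 (by rw [hz0]; ring)
  · obtain ⟨a, b, hab⟩ := (mem_Ztau_iff z).mp hzm
    have hnn : (0:ℤ) ≤ a^2 + b^2 := by positivity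
    subst hab
    obtain ⟨ℓ, z', hz'm, hz'nd, hz'e⟩ :=
      exists_val (a^2+b^2).toNat a b (le_of_eq (Int.toNat_of_nonneg hnn).symm) hz0
    -- z' is a minimal norm representative
    have hz'min : ∀ y ∈ Ztau (1+I), ‖z'‖ ≤ ‖z' - (1+I)^w * y‖ := by
      intro y hy
      have hy' : (1+I)^ℓ * y ∈ Ztau (1+I) :=
        Ztau_mul (Ztau_pow ((mem_Ztau_iff _).mpr ⟨1, 1, by push_cast; ring⟩) ℓ) hy
      have h := Hz ((1+I)^ℓ * y) hy'
      rw [hz'e, show (1+I)^ℓ * z' - (1+I)^w * ((1+I)^ℓ * y)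
          = (1+I)^ℓ * (z' - (1+I)^w * y) from by ring, norm_mul, norm_mul] at h
      have hτpos : 0 < ‖(1+I)^ℓ‖ := by
        rw [norm_pow]
        exact pow_pos (norm_pos_iff.mpr tau_ne_zero) ℓ
      exact le_of_mul_le_mul_left h hτpos
    obtain ⟨d, ⟨hdD, y₀, hy₀m, hy₀e⟩, _⟩ := hD.2.2.2 z' hz'm hz'nd
    by_cases hy0 : y₀ = 0
    · have hz'd : z' = d := by
        have := hy₀e
        rw [hy0, mul_zero, sub_eq_zero] at this
        exact this
      exact mk_exp ℓ d hdD (hz'd ▸ hz'e)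
    · exfalso
      -- d ≠ 0
      have hdne : d ≠ 0 := by
        rintro rfl
        apply hz'nd
        rw [sub_zero] at hy₀e
        refine ⟨(1+I)^(w-1) * y₀, Ztau_mul (Ztau_pow ((mem_Ztau_iff _).mpr
          ⟨1, 1, by push_cast; ring⟩) (w-1)) hy₀m, ?_⟩
        rw [hy₀e, show (1+I)^w = (1+I)*(1+I)^(w-1) from by
          rw [← pow_succ']; congr 1; omega]
        ring
      have hmnr := hD.2.2.1 d hdD hdne
      -- equality of norms
      have hle1 : ‖z'‖ ≤ ‖z' - (1+I)^w * y₀‖ := hz'min y₀ hy₀m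
      have hle2 : ‖z' - (1+I)^w * y₀‖ ≤ ‖z'‖ := by
        have h := hmnr.2.2 (-y₀) (Ztau_neg_s13 hy₀m)
        rw [show d - (1+I)^w * (-y₀) = d + (1+I)^w * y₀ from by ring] at h
        have hd1 : d = z' - (1+I)^w * y₀ := by
          rw [← hy₀e]; ring
        have hd2 : d + (1+I)^w * y₀ = z' := by rw [hd1]; ring
        rw [hd2, hd1] at h
        exact h
      have heqabs : ‖z'‖ = ‖z' - (1+I)^w * y₀‖ :=
        le_antisymm hle1 hle2
      -- coordinates
      obtain ⟨k, hk⟩ := hwodd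
      have hk1 : 1 ≤ k := by omega
      have hw2k : w = 2*k+1 := by omega
      obtain ⟨a', b', rfl⟩ := (mem_Ztau_iff z').mp hz'm
      have hodd : ¬ Even (a' + b') := fun h => hz'nd ((tauDvd_iff a' b').mpr h)
      obtain ⟨p, q, hpqe⟩ := (mem_Ztau_iff (I^k * y₀)).mp
        (Ztau_mul (Ztau_pow Ztau_I k) hy₀m)
      have hIk : (I:ℂ)^k * (-I)^k = 1 := by
        rw [← mul_pow, show I * (-I) = 1 from by
          rw [show I * (-I) = -(I*I) from by ring, Complex.I_mul_I]; ring, one_pow]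
      have hy₀' : y₀ = ((p:ℂ)+q*I) * (-I)^k := by
        rw [← hpqe, mul_comm (I^k) y₀, mul_assoc, hIk, mul_one]
      have hpq0 : ¬(p = 0 ∧ q = 0) := by
        rintro ⟨rfl, rfl⟩
        apply hy0
        rw [hy₀']
        simp
      -- the four inequalities
      have hineq : ∀ p' q' : ℤ, a'*(p'-q') + b'*(p'+q') ≤ 2^k*(p'^2+q'^2) := by
        intro p' q'
        apply key_ineq
        have hy'm : ((p':ℂ)+q'*I) * (-I)^k ∈ Ztau (1+I) :=
          Ztau_mul ((mem_Ztau_iff _).mpr ⟨p', q', rfl⟩) (Ztau_pow (Ztau_neg_s13 Ztau_I) k)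
        have h := hz'min _ hy'm
        rw [hw2k, tau_pow_mul] at h
        exact h
      have heq' : a'*(p-q) + b'*(p+q) = 2^k*(p^2+q^2) := by
        apply key_eq
        have h := heqabs
        rw [hy₀', hw2k, tau_pow_mul] at h
        exact h
      have i1 := hineq 1 0
      have i2 := hineq (-1) 0
      have i3 := hineq 0 1
      have i4 := hineq 0 (-1)
      refine final_contra k hk1 a' b' p q hpq0 hodd ?_ ?_ ?_ ?_ heq'
      · nlinarith [i1]
      · nlinarith [i2]
      · nlinarith [i3]
      · nlinarith [i4]
end
end

section
/- Suppose p = 0 and q ≥ 2, let w ≥ 3 be an odd integer and D a minimal norm representatives digit set modulo τ^w. Then there exist z ∈ ℤ[τ], a w-NAF-expansion η with value z, and a multi-expansion μ with value z such that weight(μ) < weight(η); i.e., some element of ℤ[τ] has a non-optimal w-NAF-expansion. -/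
open Complex

noncomputable section

private lemma ztau_coord {τ : ℂ} (him : τ.im ≠ 0) {a b a' b' : ℤ}
    (h : (a:ℂ) + (b:ℂ)*τ = (a':ℂ) + (b':ℂ)*τ) : a = a' ∧ b = b' := by
  have h1 : ((a:ℂ) + (b:ℂ)*τ).im = ((a':ℂ) + (b':ℂ)*τ).im := by rw [h]
  simp only [Complex.add_im, Complex.mul_im, Complex.intCast_im, Complex.intCast_re,
    zero_mul, add_zero, zero_add, mul_zero] at h1
  have hb : b = b' := by exact_mod_cast mul_right_cancel₀ him h1
  subst hb
  have h2 : (a:ℂ) = (a':ℂ) := by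
    have := add_right_cancel h
    exact this
  exact ⟨by exact_mod_cast h2, rfl⟩

private lemma ztau_ne_zero {τ : ℂ} (him : τ.im ≠ 0) {a b : ℤ} (h : a ≠ 0 ∨ b ≠ 0) :
    (a:ℂ) + (b:ℂ)*τ ≠ 0 := by
  intro h0
  have : (a:ℂ) + (b:ℂ)*τ = ((0:ℤ):ℂ) + ((0:ℤ):ℂ)*τ := by push_cast; simpa using h0
  obtain ⟨ha, hb⟩ := ztau_coord him this
  rcases h with h | h <;> [exact h ha; exact h hb]

set_option maxHeartbeats 2000000 in
private lemma mem_digit (q : ℤ) (hq : 2 ≤ q) (τ : ℂ) (him : τ.im ≠ 0)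
    (hτ2 : τ^2 = -(q:ℂ)) (w : ℕ) (D : Set ℂ) (hD : IsMinNormDigitSet τ w D)
    (r : ℤ) (hrτ : τ^w = (r:ℂ)*τ)
    (x y : ℤ) (hx : ¬ ((q:ℤ) ∣ x)) (hx2 : 4*x^2 < q^2*r^2) (hy2 : 4*y^2 ≤ r^2) :
    ∃ y' : ℤ, (y' = y ∨ (4*y^2 = r^2 ∧ y' = -y)) ∧ ((x:ℂ) + (y':ℂ)*τ) ∈ D := by
  obtain ⟨hDZ, h0D, hmin, huniq⟩ := hD
  -- basic facts about τ
  have hre : τ.re = 0 := by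
    have h1 := congrArg Complex.im hτ2
    simp only [Complex.neg_im, Complex.intCast_im, neg_zero] at h1
    rw [sq, Complex.mul_im] at h1
    rcases mul_eq_zero.1 (by linarith : (2 : ℝ) * (τ.re * τ.im) = 0) with h | h
    · norm_num at h
    · rcases mul_eq_zero.1 h with h | h
      · exact h
      · exact absurd h him
  have him2 : τ.im^2 = (q:ℝ) := by
    have h1 := congrArg Complex.re hτ2
    rw [sq, Complex.mul_re, hre] at h1
    simp only [Complex.neg_re, Complex.intCast_re, zero_mul, zero_sub] at h1
    nlinarith [h1]
  have hnsq : ∀ a b : ℤ, Complex.normSq ((a:ℂ)+(b:ℂ)*τ) = ((a^2 + q*b^2 : ℤ) : ℝ) := by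
    intro a b
    rw [Complex.normSq_apply]
    simp only [Complex.add_re, Complex.add_im, Complex.mul_re, Complex.mul_im,
      Complex.intCast_re, Complex.intCast_im, hre, mul_zero, zero_mul, sub_zero,
      add_zero, zero_add]
    push_cast
    nlinarith [him2]
  have hg : (x:ℂ) + (y:ℂ)*τ ∈ Ztau τ := ⟨x, y, rfl⟩
  have hgnd : ¬ TauDvd τ ((x:ℂ) + (y:ℂ)*τ) := by
    rintro ⟨_, ⟨u, v, rfl⟩, hguv⟩
    have hco : (x:ℂ) + (y:ℂ)*τ = ((-q*v : ℤ):ℂ) + ((u:ℤ):ℂ)*τ := by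
      push_cast
      linear_combination hguv + (v:ℂ) * hτ2
    obtain ⟨hx', _⟩ := ztau_coord him hco
    exact hx ⟨-v, by linarith⟩
  obtain ⟨dd, ⟨hdD, yy, hyyZ, hsub⟩, _⟩ := huniq _ hg hgnd
  obtain ⟨u, v, rfl⟩ := hyyZ
  rw [hrτ] at hsub
  have hd_eq : dd = ((x + q*r*v : ℤ):ℂ) + ((y - r*u : ℤ):ℂ)*τ := by
    push_cast
    linear_combination -hsub - ((r:ℂ)*(v:ℂ)) * hτ2
  have hdne : dd ≠ 0 := by
    intro h0
    rw [h0] at hd_eq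
    have hco : ((0:ℤ):ℂ) + ((0:ℤ):ℂ)*τ = ((x + q*r*v : ℤ):ℂ) + ((y - r*u : ℤ):ℂ)*τ := by
      push_cast
      push_cast at hd_eq
      linear_combination hd_eq
    obtain ⟨h1, _⟩ := ztau_coord him hco
    exact hx ⟨-(r*v), by linarith⟩
  have hm := hmin dd hdD hdne
  have habs : ‖dd‖ ≤ ‖(x:ℂ)+(y:ℂ)*τ‖ := by
    have hmem : ((-u:ℤ):ℂ) + ((-v:ℤ):ℂ)*τ ∈ Ztau τ := ⟨-u, -v, rfl⟩
    have h2 := hm.2.2 _ hmem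
    have he : dd - τ^w * (((-u:ℤ):ℂ) + ((-v:ℤ):ℂ)*τ) = (x:ℂ)+(y:ℂ)*τ := by
      rw [hrτ]
      push_cast
      push_cast at hsub
      linear_combination -hsub
    rwa [he] at h2
  have hns : Complex.normSq dd ≤ Complex.normSq ((x:ℂ)+(y:ℂ)*τ) := by
    rw [← Complex.sq_norm, ← Complex.sq_norm]
    exact pow_le_pow_left₀ (norm_nonneg _) habs 2
  rw [hd_eq, hnsq, hnsq] at hns
  have hZ : (x + q*r*v)^2 + q*(y - r*u)^2 ≤ x^2 + q*y^2 := by exact_mod_cast hns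
  have hq0 : (0:ℤ) < q := by linarith
  have hyge : y^2 ≤ (y - r*u)^2 := by
    rcases eq_or_ne u 0 with rfl | hu
    · simp
    · have hu2 : 1 ≤ u^2 := by rcases lt_or_gt_of_ne hu with h | h <;> nlinarith
      nlinarith [sq_nonneg (2*y - r*u), sq_nonneg (r*u), mul_le_mul_of_nonneg_left hu2 (sq_nonneg r)]
  have hv : v = 0 := by
    by_contra hv
    have hv2 : 1 ≤ v^2 := by rcases lt_or_gt_of_ne hv with h | h <;> nlinarith
    nlinarith [sq_nonneg (2*x + q*r*v), mul_le_mul_of_nonneg_left hv2 (sq_nonneg (q*r)),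
      mul_le_mul_of_nonneg_left hyge hq0.le]
  subst hv
  have hZ2 : (y - r*u)^2 = y^2 := by nlinarith
  have hfac : (r*u) * (r*u - 2*y) = 0 := by linear_combination hZ2
  refine ⟨y - r*u, ?_, ?_⟩
  · rcases mul_eq_zero.1 hfac with h | h
    · left; linarith
    · rcases eq_or_ne u 0 with rfl | hu
      · left; ring
      · have hu2 : 1 ≤ u^2 := by rcases lt_or_gt_of_ne hu with h' | h' <;> nlinarith
        have hru : r*u = 2*y := by linarith
        have h4 : 4*y^2 = r^2*u^2 := by linear_combination (-(r*u + 2*y)) * hru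
        have hr2 : 1 ≤ r^2 := by
          rcases eq_or_ne r 0 with rfl | hr
          · exfalso; nlinarith [sq_nonneg x]
          · rcases lt_or_gt_of_ne hr with h' | h' <;> nlinarith
        have h5 : r^2*u^2 ≤ r^2 := by linarith
        have h6 : r^2 ≤ r^2*u^2 := by simpa using mul_le_mul_of_nonneg_left hu2 (sq_nonneg r)
        have h8 : r^2*(u^2-1) = 0 := by linear_combination (le_antisymm h5 h6)
        have hu1 : u^2 = 1 := by
          rcases mul_eq_zero.1 h8 with h9 | h9
          · linarith
          · linarith
        have h7 : r^2*u^2 = r^2 := by rw [hu1]; ring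
        right
        exact ⟨by linarith, by linarith⟩
  · have hdd : dd = ((x:ℤ):ℂ) + ((y - r*u : ℤ):ℂ)*τ := by
      rw [hd_eq]
      norm_num
    exact hdd ▸ hdD

private lemma assemble (τ : ℂ) (w : ℕ) (hw : 3 ≤ w) (D : Set ℂ)
    (h0D : (0:ℂ) ∈ D)
    (e0 e1 e2 c d : ℂ)
    (he0D : e0 ∈ D) (he1D : e1 ∈ D) (he2D : e2 ∈ D) (hcD : c ∈ D) (hdD : d ∈ D)
    (he0 : e0 ≠ 0) (he1 : e1 ≠ 0) (he2 : e2 ≠ 0) (hc : c ≠ 0) (hd : d ≠ 0)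
    (hzZ : c + d * τ ^ (w-1) ∈ Ztau τ)
    (hval : e0 + e1 * τ ^ w + e2 * τ ^ (2*w) = c + d * τ ^ (w-1)) :
    ∃ z ∈ Ztau τ, ∃ η : ℕ →₀ ℂ,
      IsExpansion D η ∧ IsWNAF w η ∧ evalue τ η = z ∧
      ∃ μ : Multiset (ℂ × ℕ), IsMultiExpansion D μ ∧ mvalue τ μ = z ∧
        Multiset.card μ < eweight η := by
  classical
  set η : ℕ →₀ ℂ := Finsupp.single 0 e0 + Finsupp.single w e1 + Finsupp.single (2*w) e2
    with hη
  have happ : ∀ j : ℕ, η j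
      = (if 0 = j then e0 else 0) + (if w = j then e1 else 0) + (if 2*w = j then e2 else 0) := by
    intro j
    simp [hη, Finsupp.add_apply, Finsupp.single_apply]
  have hkey : ∀ j : ℕ, η j ≠ 0 → j = 0 ∨ j = w ∨ j = 2*w := by
    intro j hj
    by_contra hcon
    push_neg at hcon
    apply hj
    rw [happ j, if_neg (by omega), if_neg (by omega), if_neg (by omega)]
    simp
  have h0j : η 0 = e0 := by rw [happ 0, if_pos rfl, if_neg (by omega), if_neg (by omega)]; ring
  have hwj : η w = e1 := by rw [happ w, if_neg (by omega), if_pos rfl, if_neg (by omega)]; ring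
  have h2wj : η (2*w) = e2 := by
    rw [happ (2*w), if_neg (by omega), if_neg (by omega), if_pos rfl]; ring
  refine ⟨c + d * τ ^ (w-1), hzZ, η, ?_, ?_, ?_, {(c,0), (d, w-1)}, ?_, ?_, ?_⟩
  · -- IsExpansion
    intro n
    by_cases h0 : n = 0
    · rw [h0, h0j]; exact he0D
    by_cases h1 : n = w
    · rw [h1, hwj]; exact he1D
    by_cases h2 : n = 2*w
    · rw [h2, h2wj]; exact he2D
    · have : η n = 0 := by
        by_contra h
        rcases hkey n h with h' | h' | h' <;> omega
      rw [this]; exact h0D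
  · -- IsWNAF
    intro m n hmn hm hn
    rcases hkey m hm with h | h | h <;> rcases hkey n hn with h' | h' | h' <;>
      subst h <;> subst h' <;> (rw [le_abs]; push_cast; omega)
  · -- evalue
    have hsum : evalue τ η = e0 * τ ^ 0 + e1 * τ ^ w + e2 * τ ^ (2*w) := by
      rw [hη]
      unfold evalue
      rw [Finsupp.sum_add_index' (h := fun (n : ℕ) (d : ℂ) => d * τ ^ n)
          (fun a => zero_mul _) (fun a b₁ b₂ => add_mul b₁ b₂ _),
        Finsupp.sum_add_index' (h := fun (n : ℕ) (d : ℂ) => d * τ ^ n)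
          (fun a => zero_mul _) (fun a b₁ b₂ => add_mul b₁ b₂ _),
        Finsupp.sum_single_index (b := e0) (h := fun (n : ℕ) (d : ℂ) => d * τ ^ n) (zero_mul _),
        Finsupp.sum_single_index (b := e1) (h := fun (n : ℕ) (d : ℂ) => d * τ ^ n) (zero_mul _),
        Finsupp.sum_single_index (b := e2) (h := fun (n : ℕ) (d : ℂ) => d * τ ^ n) (zero_mul _)]
    rw [hsum, pow_zero, mul_one]
    exact hval
  · -- IsMultiExpansion
    intro x hx
    have : x = (c, 0) ∨ x = (d, w-1) := by
      simpa [Multiset.mem_cons, Multiset.mem_singleton] using hx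
    rcases this with rfl | rfl
    · exact ⟨hcD, hc⟩
    · exact ⟨hdD, hd⟩
  · -- mvalue
    show mvalue τ ((c,0) ::ₘ {(d, w-1)}) = c + d * τ ^ (w-1)
    unfold mvalue
    simp
  · -- card
    have hsupp : η.support = {0, w, 2*w} := by
      ext j
      simp only [Finsupp.mem_support_iff, Finset.mem_insert, Finset.mem_singleton]
      constructor
      · intro hj; exact hkey j hj
      · rintro (rfl | rfl | rfl)
        · rw [h0j]; exact he0
        · rw [hwj]; exact he1
        · rw [h2wj]; exact he2
    have hcard : eweight η = 3 := by
      unfold eweight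
      rw [hsupp]
      rw [Finset.card_insert_of_notMem (by simp; omega),
        Finset.card_insert_of_notMem (by simp; omega), Finset.card_singleton]
    rw [hcard]
    simp

set_option maxHeartbeats 4000000 in
/-- Non-optimality for `p = 0`, `q ≥ 2` and odd `w ≥ 3`: some element of
`ℤ[τ]` has a `w`-NAF-expansion which is beaten by a multi-expansion. -/
theorem wnaf_nonoptimal_p0_w_odd (p q : ℤ) (τ : ℂ)
    (hp : p = 0) (hq : 2 ≤ q)
    (hpq : p ^ 2 < 4 * q)
    (hroot : τ ^ 2 - (p : ℂ) * τ + (q : ℂ) = 0)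
    (him : τ.im ≠ 0)
    (w : ℕ) (hw : 3 ≤ w) (hwodd : Odd w)
    (D : Set ℂ) (hD : IsMinNormDigitSet τ w D) :
    ∃ z ∈ Ztau τ, ∃ η : ℕ →₀ ℂ,
      IsExpansion D η ∧ IsWNAF w η ∧ evalue τ η = z ∧
      ∃ μ : Multiset (ℂ × ℕ), IsMultiExpansion D μ ∧ mvalue τ μ = z ∧
        Multiset.card μ < eweight η := by
  subst hp
  have hτ2 : τ^2 = -(q:ℂ) := by
    have h := hroot
    push_cast at h
    linear_combination h
  obtain ⟨k, hk⟩ := hwodd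
  have hk1 : 1 ≤ k := by omega
  obtain ⟨S, hSdef⟩ : ∃ S : ℤ, S = q^k := ⟨_, rfl⟩
  obtain ⟨r, hrdef⟩ : ∃ r : ℤ, r = (-q)^k := ⟨_, rfl⟩
  have h2k : r^2 = S^2 := by
    rw [hrdef, hSdef, ← pow_mul, ← pow_mul, mul_comm k 2, pow_mul, pow_mul, neg_sq]
  have hrS : r = S ∨ r = -S := by
    rcases mul_eq_zero.1 (show (r - S)*(r + S) = 0 by linear_combination h2k) with h | h
    · left; linarith
    · right; linarith
  have hS2 : 2 ≤ S := by
    rw [hSdef]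
    calc (2:ℤ) = 2^1 := by norm_num
    _ ≤ 2^k := pow_le_pow_right₀ (by norm_num) hk1
    _ ≤ q^k := pow_le_pow_left₀ (by norm_num) hq k
  have hqS : (q:ℤ) ∣ S := by rw [hSdef]; exact dvd_pow_self q (by omega)
  have hrag : ((r:ℤ):ℂ) = (-(q:ℂ))^k := by rw [hrdef]; push_cast; ring
  have hτw : τ^w = (r:ℂ)*τ := by
    rw [hk, pow_succ, pow_mul, hτ2, hrag]
  have hτw1 : τ^(w-1) = (r:ℂ) := by
    rw [show w - 1 = 2*k by omega, pow_mul, hτ2, ← hrag]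
  have hτ2w : τ^(2*w) = ((r:ℂ)^2) * (-(q:ℂ)) := by
    rw [mul_comm 2 w, pow_mul, hτw, mul_pow, hτ2]
  have h0D : (0:ℂ) ∈ D := hD.2.1
  have hq1 : ¬ ((q:ℤ) ∣ 1) := by
    intro h
    have := Int.le_of_dvd one_pos h
    omega
  have hndiv : ∀ a x : ℤ, (q:ℤ) ∣ a → (x - a = 1 ∨ a - x = 1) → ¬ ((q:ℤ) ∣ x) := by
    intro a x ha hax h
    rcases hax with h1 | h1
    · exact hq1 (by rw [← h1]; exact dvd_sub h ha)
    · exact hq1 (by rw [← h1]; exact dvd_sub ha h)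
  have hqm1 : ¬ ((q:ℤ) ∣ (-1)) := hndiv 0 (-1) (dvd_zero q) (Or.inr (by ring))
  have memD := mem_digit q hq τ him hτ2 w D hD r hτw
  have memD0 : ∀ x : ℤ, ¬((q:ℤ) ∣ x) → 4*x^2 < q^2*r^2 → ((x:ℂ) + ((0:ℤ):ℂ)*τ) ∈ D := by
    intro x hx hx2
    obtain ⟨y', hy', hm⟩ := memD x 0 hx hx2 (by nlinarith [sq_nonneg r])
    have hy0 : y' = 0 := by rcases hy' with h | ⟨_, h⟩ <;> omega
    rwa [hy0] at hm
  have memD1 : 4 < r^2 → ∀ x : ℤ, ¬((q:ℤ) ∣ x) → 4*x^2 < q^2*r^2 →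
      ((x:ℂ) + ((1:ℤ):ℂ)*τ) ∈ D := by
    intro h4 x hx hx2
    obtain ⟨y', hy', hm⟩ := memD x 1 hx hx2 (by linarith)
    have hy1 : y' = 1 := by
      rcases hy' with h | ⟨h1, h2⟩
      · exact h
      · exfalso; linarith
    rwa [hy1] at hm
  -- master assembly step
  have main : ∀ A B y1' C E F : ℤ, A ≠ 0 → B ≠ 0 → C ≠ 0 → E ≠ 0 →
      ((A:ℂ) + ((0:ℤ):ℂ)*τ ∈ D) → ((B:ℂ) + (y1':ℂ)*τ ∈ D) → ((C:ℂ) + ((0:ℤ):ℂ)*τ ∈ D) →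
      ((E:ℂ) + ((0:ℤ):ℂ)*τ ∈ D) → ((F:ℂ) + (B:ℂ)*τ ∈ D) →
      (A - q*r*y1' - q*r^2*C = E + r*F) →
      ∃ z ∈ Ztau τ, ∃ η : ℕ →₀ ℂ,
        IsExpansion D η ∧ IsWNAF w η ∧ evalue τ η = z ∧
        ∃ μ : Multiset (ℂ × ℕ), IsMultiExpansion D μ ∧ mvalue τ μ = z ∧
          Multiset.card μ < eweight η := by
    intro A B y1' C E F hA hB hC hE hmA hmB hmC hmE hmF hid
    have hidC : (A:ℂ) - (q:ℂ)*(r:ℂ)*(y1':ℂ) - (q:ℂ)*(r:ℂ)^2*(C:ℂ) = (E:ℂ) + (r:ℂ)*(F:ℂ) := by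
      exact_mod_cast hid
    refine assemble τ w hw D h0D _ _ _ _ _ hmA hmB hmC hmE hmF
      (ztau_ne_zero him (Or.inl hA)) ?_ (ztau_ne_zero him (Or.inl hC))
      (ztau_ne_zero him (Or.inl hE)) ?_ ?_ ?_
    · -- e1 ≠ 0
      intro h0
      have hco : (B:ℂ) + (y1':ℂ)*τ = ((0:ℤ):ℂ) + ((0:ℤ):ℂ)*τ := by push_cast; simpa using h0
      exact hB (ztau_coord him hco).1
    · -- d ≠ 0
      intro h0
      have hco : (F:ℂ) + (B:ℂ)*τ = ((0:ℤ):ℂ) + ((0:ℤ):ℂ)*τ := by push_cast; simpa using h0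
      exact hB (ztau_coord him hco).2
    · -- z ∈ Ztau
      refine ⟨E + r*F, r*B, ?_⟩
      rw [hτw1]
      push_cast
      ring
    · -- value identity
      rw [hτw, hτ2w, hτw1]
      linear_combination hidC + ((y1':ℂ)*(r:ℂ))*hτ2
  rcases Int.even_or_odd q with hqe | hqo
  · -- q even
    obtain ⟨c0, hc0⟩ : ∃ c0, S = q * c0 := hqS
    obtain ⟨e, he⟩ := hqe
    obtain ⟨T, hT⟩ : ∃ T : ℤ, S = 2*T := ⟨e*c0, by rw [hc0, he]; ring⟩
    have hT1 : 1 ≤ T := by omega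
    have h2T : (q:ℤ) ∣ 2*T := by rw [← hT]; exact ⟨c0, hc0⟩
    have hq2 : 4 ≤ q^2 := by nlinarith
    by_cases hT2 : 2 ≤ T
    · -- generic even case
      have hT4 : 4 ≤ S := by omega
      have hmulq : 4*T^2 ≤ q^2*T^2 := by nlinarith [sq_nonneg T]
      have hS2sq : 4 ≤ S^2 := by nlinarith [hS2]
      have h16 : 16 ≤ q^2*S^2 := by
        calc (16:ℤ) = 4*4 := by norm_num
        _ ≤ q^2*S^2 := mul_le_mul hq2 hS2sq (by norm_num) (by positivity)
      have hb1 : 4*(1:ℤ)^2 < q^2*r^2 := by rw [h2k]; linarith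
      have hbm1 : 4*(-1:ℤ)^2 < q^2*r^2 := by rw [h2k]; linarith
      have hbA : 4*(2*T-1)^2 < q^2*r^2 := by rw [h2k, hT]; nlinarith [hmulq, hT2]
      have hbA' : 4*(1-2*T)^2 < q^2*r^2 := by rw [h2k, hT]; nlinarith [hmulq, hT2]
      have hqT : 2 ≤ q*T := by nlinarith
      have hbF : 4*(q*T-1)^2 < q^2*r^2 := by rw [h2k, hT]; nlinarith [hqT]
      have hbF' : 4*(1-q*T)^2 < q^2*r^2 := by rw [h2k, hT]; nlinarith [hqT]
      have h4r : 4 < r^2 := by rw [h2k]; nlinarith [hT4]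
      have hy2T : 4*T^2 ≤ r^2 := by
        rw [h2k]
        nlinarith [hT]
      obtain ⟨y1, hy1, he1D⟩ := memD 1 T hq1 hb1 hy2T
      have hy1' : y1 = T ∨ y1 = -T := by
        rcases hy1 with h | ⟨_, h⟩
        · left; exact h
        · right; exact h
      have hndA : ¬ ((q:ℤ) ∣ (2*T-1)) := hndiv (2*T) _ h2T (Or.inr (by ring))
      have hndA' : ¬ ((q:ℤ) ∣ (1-2*T)) := hndiv (-(2*T)) _ (dvd_neg.mpr h2T) (Or.inl (by ring))
      have hndF : ¬ ((q:ℤ) ∣ (q*T-1)) := hndiv (q*T) _ (dvd_mul_right q T) (Or.inr (by ring))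
      have hndF' : ¬ ((q:ℤ) ∣ (1-q*T)) :=
        hndiv (-(q*T)) _ (dvd_neg.mpr (dvd_mul_right q T)) (Or.inl (by ring))
      rcases hy1' with h | h <;> rcases hrS with h2 | h2
      · exact main (1-2*T) 1 y1 (-1) 1 (q*T-1) (by omega) one_ne_zero (by norm_num) one_ne_zero
          (memD0 _ hndA' hbA') he1D (memD0 _ hqm1 hbm1) (memD0 _ hq1 hb1)
          (memD1 h4r _ hndF hbF) (by rw [h, h2, hT]; ring)
      · exact main (2*T-1) 1 y1 1 (-1) (q*T-1) (by omega) one_ne_zero one_ne_zero (by norm_num)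
          (memD0 _ hndA hbA) he1D (memD0 _ hq1 hb1) (memD0 _ hqm1 hbm1)
          (memD1 h4r _ hndF hbF) (by rw [h, h2, hT]; ring)
      · exact main (2*T-1) 1 y1 1 (-1) (1-q*T) (by omega) one_ne_zero one_ne_zero (by norm_num)
          (memD0 _ hndA hbA) he1D (memD0 _ hq1 hb1) (memD0 _ hqm1 hbm1)
          (memD1 h4r _ hndF' hbF') (by rw [h, h2, hT]; ring)
      · exact main (1-2*T) 1 y1 (-1) 1 (1-q*T) (by omega) one_ne_zero (by norm_num) one_ne_zero
          (memD0 _ hndA' hbA') he1D (memD0 _ hqm1 hbm1) (memD0 _ hq1 hb1)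
          (memD1 h4r _ hndF' hbF') (by rw [h, h2, hT]; ring)
    · -- special case q = 2, w = 3
      have hT1' : T = 1 := by omega
      have hSval : S = 2 := by omega
      have hq2' : q = 2 := by
        by_contra hne
        have h3 : 3 ≤ q := by omega
        have : 3 ≤ S := by
          rw [hSdef]
          calc (3:ℤ) = 3^1 := by norm_num
          _ ≤ 3^k := pow_le_pow_right₀ (by norm_num) hk1
          _ ≤ q^k := pow_le_pow_left₀ (by norm_num) h3 k
        omega
      have hkval : k = 1 := by
        by_contra hne
        have h2' : 2 ≤ k := by omega
        have : 4 ≤ S := by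
          rw [hSdef]
          calc (4:ℤ) = 2^2 := by norm_num
          _ ≤ 2^k := pow_le_pow_right₀ (by norm_num) h2'
          _ ≤ q^k := pow_le_pow_left₀ (by norm_num) hq k
        omega
      have hrval : r = -2 := by rw [hrdef, hq2', hkval]; norm_num
      have hbx : ∀ x : ℤ, x = 1 ∨ x = -1 → 4*x^2 < q^2*r^2 := by
        rintro x (rfl | rfl) <;> rw [hrval, hq2'] <;> norm_num
      have hby : (4:ℤ)*1^2 ≤ r^2 := by rw [hrval]; norm_num
      obtain ⟨s1, hs1, hg1⟩ := memD 1 1 hq1 (hbx 1 (Or.inl rfl)) hby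
      obtain ⟨s2, hs2, hg2⟩ := memD (-1) 1 hqm1 (hbx (-1) (Or.inr rfl)) hby
      have hs1' : s1 = 1 ∨ s1 = -1 := by
        rcases hs1 with h | ⟨_, h⟩
        · left; exact h
        · right; exact h
      have hs2' : s2 = 1 ∨ s2 = -1 := by
        rcases hs2 with h | ⟨_, h⟩
        · left; exact h
        · right; exact h
      have hm1D : ((1:ℤ):ℂ) + ((0:ℤ):ℂ)*τ ∈ D := memD0 1 hq1 (hbx 1 (Or.inl rfl))
      have hmm1D : ((-1:ℤ):ℂ) + ((0:ℤ):ℂ)*τ ∈ D := memD0 (-1) hqm1 (hbx (-1) (Or.inr rfl))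
      rcases hs1' with hv1 | hv1
      · -- s1 = 1 : use identity 1 + (1+τ)τ^w + τ^{2w} = -1 + (1+τ)τ^{w-1}
        subst hv1
        exact main 1 1 1 1 (-1) 1 one_ne_zero one_ne_zero one_ne_zero (by norm_num)
          hm1D hg1 hm1D hmm1D hg1 (by rw [hrval, hq2']; ring)
      · rcases hs2' with hv2 | hv2
        · -- s1 = -1, s2 = 1
          subst hv1; subst hv2
          exact main (-1) 1 (-1) (-1) 1 (-1) (by norm_num) one_ne_zero (by norm_num) one_ne_zero
            hmm1D hg1 hmm1D hm1D hg2 (by rw [hrval, hq2']; ring)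
        · -- s2 = -1
          subst hv2
          exact main (-1) (-1) (-1) (-1) 1 (-1) (by norm_num) (by norm_num) (by norm_num)
            one_ne_zero hmm1D hg2 hmm1D hm1D hg2 (by rw [hrval, hq2']; ring)
  · -- q odd
    have hq3 : 3 ≤ q := by
      rcases hqo with ⟨j, hj⟩
      omega
    have hS3 : 3 ≤ S := by
      rw [hSdef]
      calc (3:ℤ) = 3^1 := by norm_num
      _ ≤ 3^k := pow_le_pow_right₀ (by norm_num) hk1
      _ ≤ q^k := pow_le_pow_left₀ (by norm_num) hq3 k
    have hSo : Odd S := by rw [hSdef]; exact hqo.pow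
    obtain ⟨L, hL⟩ := hSo
    have hL1 : 1 ≤ L := by omega
    obtain ⟨J, hJ⟩ := hqo
    have hJ1 : 1 ≤ J := by omega
    obtain ⟨α, hα, hαnd⟩ : ∃ α : ℤ, (α = L+1 ∨ α = L+2) ∧ ¬ ((q:ℤ) ∣ α) := by
      by_cases hdvd : (q:ℤ) ∣ (L+1)
      · refine ⟨L+2, Or.inr rfl, fun h => hq1 ?_⟩
        have h1 := dvd_sub h hdvd
        have h2 : (L+2) - (L+1) = 1 := by ring
        rwa [h2] at h1
      · exact ⟨L+1, Or.inl rfl, hdvd⟩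
    have hα0 : α ≠ 0 := by
      intro h
      rw [h] at hαnd
      exact hαnd (dvd_zero q)
    have hαpos : 0 < α := by omega
    -- bounds
    have hqSpos : 9 ≤ q*S := by
      have := mul_le_mul hq3 hS3 (by linarith) (by linarith)
      linarith
    have hbsq : ∀ x : ℤ, 0 ≤ 2*x → 2*x < q*S → 4*x^2 < q^2*r^2 := by
      intro x h0 h1
      rw [h2k]
      nlinarith [mul_self_lt_mul_self h0 h1]
    have hbsq' : ∀ x : ℤ, 0 ≤ -(2*x) → -(2*x) < q*S → 4*x^2 < q^2*r^2 := by
      intro x h0 h1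
      rw [h2k]
      nlinarith [mul_self_lt_mul_self h0 h1]
    have h3S : 3*S ≤ q*S := by
      nlinarith [mul_nonneg (show (0:ℤ) ≤ q-3 by linarith) (show (0:ℤ) ≤ S by linarith)]
    have hbα : 4*α^2 < q^2*r^2 := by
      refine hbsq α (by omega) ?_
      have hh : 2*α ≤ S + 3 := by omega
      linarith
    have hb1 : 4*(1:ℤ)^2 < q^2*r^2 := hbsq 1 (by norm_num) (by linarith)
    have h4r : 4 < r^2 := by rw [h2k]; nlinarith [hS3]
    obtain ⟨E, hEdef⟩ : ∃ E : ℤ, E = α - (2*L+1)*(J+1) := ⟨_, rfl⟩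
    have hndE : ¬ ((q:ℤ) ∣ E) := by
      intro h
      apply hαnd
      have h1 : α = E + (2*L+1)*(J+1) := by rw [hEdef]; ring
      rw [h1]
      refine dvd_add h ?_
      have h2 : (2*L+1) = S := by omega
      rw [h2]
      exact hqS.mul_right (J+1)
    have hE0 : E ≠ 0 := by
      intro h
      rw [h] at hndE
      exact hndE (dvd_zero q)
    have hbE : 4*E^2 < q^2*r^2 := by
      have hα2 : α ≤ L + 2 := by omega
      have h1 : 2*L + 2 ≤ 2*α := by omega
      have h2'' : 2*(2*L+1) ≤ (2*L+1)*(J+1) := by nlinarith [hJ1, hL1]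
      refine hbsq' E ?_ ?_ <;> rw [hEdef]
      · nlinarith [h2'', hα2, hL1]
      · rw [hJ, hL]
        nlinarith [h1]
    obtain ⟨F, hFdef⟩ : ∃ F : ℤ, F = 2*J*L + J + L := ⟨_, rfl⟩
    have h2F : 2*F = q*S - 1 := by rw [hFdef, hJ, hL]; ring
    have hndF : ¬ ((q:ℤ) ∣ F) := by
      intro h
      apply hq1
      have h1 : (q:ℤ) ∣ 2*F := Dvd.dvd.mul_left h 2
      have h2 : (q:ℤ) ∣ q*S := dvd_mul_right q S
      have h3 := dvd_sub h2 h1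
      rw [h2F] at h3
      have h4 : q*S - (q*S - 1) = 1 := by ring
      rwa [h4] at h3
    have hndF' : ¬ ((q:ℤ) ∣ (-F)) := fun h => hndF (dvd_neg.mp h)
    have hbF : 4*F^2 < q^2*r^2 :=
      hbsq F (by linarith [h2F, hqSpos]) (by linarith [h2F, hqSpos])
    have hbF' : 4*(-F)^2 < q^2*r^2 :=
      hbsq' (-F) (by linarith [h2F, hqSpos]) (by linarith [h2F, hqSpos])
    have hy2L : 4*(-L)^2 ≤ r^2 := by rw [h2k, hL]; nlinarith [hL1]
    have hy2L' : 4*(L:ℤ)^2 ≤ r^2 := by rw [h2k, hL]; nlinarith [hL1]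
    rcases hrS with h2 | h2
    · -- r = S : y1 = -L, F' = -F
      obtain ⟨y1, hy1, he1D⟩ := memD 1 (-L) hq1 hb1 hy2L
      have hy1v : y1 = -L := by
        rcases hy1 with h | ⟨h4, _⟩
        · exact h
        · exfalso; rw [h2k, hL] at h4; nlinarith [h4, hL1]
      exact main α 1 y1 1 E (-F) hα0 one_ne_zero one_ne_zero hE0
        (memD0 _ hαnd hbα) he1D (memD0 _ hq1 hb1) (memD0 _ hndE hbE)
        (memD1 h4r _ hndF' hbF')
        (by rw [hy1v, h2, hEdef, hFdef, hL, hJ]; ring)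
    · -- r = -S : y1 = L, F' = F
      obtain ⟨y1, hy1, he1D⟩ := memD 1 L hq1 hb1 hy2L'
      have hy1v : y1 = L := by
        rcases hy1 with h | ⟨h4, _⟩
        · exact h
        · exfalso; rw [h2k, hL] at h4; nlinarith [h4, hL1]
      exact main α 1 y1 1 E F hα0 one_ne_zero one_ne_zero hE0
        (memD0 _ hαnd hbα) he1D (memD0 _ hq1 hb1) (memD0 _ hndE hbE)
        (memD1 h4r _ hndF hbF)
        (by rw [hy1v, h2, hEdef, hFdef, hL, hJ]; ring)
end
end
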